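/- arXiv:1703.00283 — 3 statements merged into one kernel-verified Lean document; each statement's English description precedes it below -/
import Mathlib

section
/- Let p = 0. For every 0 ≤ s < 1 one has T₊(s) ≤ 8(|q| + 1) · P_{γ,+}(s) + B₊(s). -/
open MeasureTheory Metric Complex Set ENNReal
open scoped Classical

noncomputable section

/-- positive part of the logarithm: `log⁺ t = max (log t) 0`. -/
def logPlus (t : ℝ) : ℝ := max (Real.log t) 0

/-- negative part of the logarithm: `log⁻ t = max (-log t) 0`. -/
def logMinus (t : ℝ) : ℝ := max (-Real.log t) 0

/-- `|R(z)| = ∏ j |z - η j| ^ (q j)`. -/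
def Rabs {n : ℕ} (η : Fin n → ℂ) (q : Fin n → ℝ) (z : ℂ) : ℝ :=
  ∏ j, ‖z - η j‖ ^ q j

/-- Laplacian of a real valued function on `ℂ`:
`Δg(z) = ∂²g/∂x²(z) + ∂²g/∂y²(z)`. -/
def lap (g : ℂ → ℝ) (z : ℂ) : ℝ :=
  iteratedDeriv 2 (fun t : ℝ => g (z + (t : ℂ))) 0 +
  iteratedDeriv 2 (fun t : ℝ => g (z + (t : ℂ) * Complex.I)) 0

/-- the order of vanishing of `f` at `a` (0 if `f` is not analytic at `a`). -/
def zeroOrder (f : ℂ → ℂ) (a : ℂ) : ℕ :=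
  if h : AnalyticAt ℂ f a then (analyticOrderAt f a).toNat else 0

/-- the sum, over the zeros `a` of `f` in the unit disc counted with multiplicity,
of the weight `w a`, computed in `ℝ≥0∞`. -/
def zeroSum (f : ℂ → ℂ) (w : ℂ → ℝ) : ℝ≥0∞ :=
  ∑' a : (ball (0 : ℂ) 1 : Set ℂ), (zeroOrder f a : ℝ≥0∞) * ENNReal.ofReal (w a)

/-- `M(ρ) = sup_θ |R(ρ e^{iθ})|²`. -/
def Msup {n : ℕ} (η : Fin n → ℂ) (q : Fin n → ℝ) (ρ : ℝ) : ℝ :=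
  ⨆ θ : ℝ, (Rabs η q ((ρ : ℂ) * Complex.exp ((θ : ℂ) * Complex.I))) ^ 2

/-- `m(ρ) = inf_θ |R(ρ e^{iθ})|²`. -/
def minf {n : ℕ} (η : Fin n → ℂ) (q : Fin n → ℝ) (ρ : ℝ) : ℝ :=
  ⨅ θ : ℝ, (Rabs η q ((ρ : ℂ) * Complex.exp ((θ : ℂ) * Complex.I))) ^ 2

/-- `c(δ,u) = sup_{0≤s<1} sup_{0≤ρ<u} (M(sρ)/m(sρ)) (1-ρ²)^δ`. -/
def cconst {n : ℕ} (η : Fin n → ℂ) (q : Fin n → ℝ) (δ u : ℝ) : ℝ :=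
  ⨆ s : (Ico (0:ℝ) 1 : Set ℝ), ⨆ ρ : (Ico (0:ℝ) u : Set ℝ),
    (Msup η q ((s : ℝ) * (ρ : ℝ)) / minf η q ((s : ℝ) * (ρ : ℝ))) * (1 - (ρ : ℝ) ^ 2) ^ δ

namespace Stmt6Aux
open MeasureTheory Metric Complex Set Filter

lemma logPlus_eq {t : ℝ} (ht : 0 ≤ t) : logPlus t = Real.log (max t 1) := by
  unfold logPlus
  rcases le_or_gt 1 t with h | h
  · rw [max_eq_left h, max_eq_left (Real.log_nonneg h)]
  · rw [max_eq_right h.le, Real.log_one, max_eq_right (Real.log_nonpos ht h.le)]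

lemma rpow_sq (x : ℝ) (hx : 0 ≤ x) (r : ℝ) : (x ^ r) ^ 2 = (x ^ 2) ^ r := by
  rw [← Real.rpow_natCast (x ^ r) 2, ← Real.rpow_natCast x 2,
    ← Real.rpow_mul hx, ← Real.rpow_mul hx, mul_comm]

lemma Rabs_sq {n : ℕ} (η : Fin n → ℂ) (q : Fin n → ℝ) (w : ℂ) :
    (Rabs η q w) ^ 2 = ∏ j, (Complex.normSq (w - η j)) ^ (q j) := by
  unfold Rabs
  rw [← Finset.prod_pow]
  refine Finset.prod_congr rfl fun j _ => ?_
  rw [rpow_sq _ (norm_nonneg _), Complex.sq_norm]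

lemma quad_hasDerivAt (A B C t : ℝ) :
    HasDerivAt (fun t : ℝ => A + B * t + C * t ^ 2) (B + 2 * C * t) t := by
  have h1 : HasDerivAt (fun t : ℝ => A + B * t + C * t ^ 2)
      (0 + B * 1 + C * (2 * t ^ 1)) t :=
    (((hasDerivAt_const t A).add ((hasDerivAt_id t).const_mul B)).add
      ((hasDerivAt_pow 2 t).const_mul C))
  convert h1 using 1; ring

lemma second_deriv_main {n : ℕ} (q : Fin n → ℝ) (A B : Fin n → ℝ) (C A₀ B₀ : ℝ)
    (hA : ∀ j, 0 < A j) :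
    iteratedDeriv 2 (fun t : ℝ =>
        (1 - (A₀ + B₀ * t + t ^ 2)) * ∏ j, (A j + B j * t + C * t ^ 2) ^ (q j)) 0
    = (∏ j, (A j) ^ (q j)) *
      (-2 - 2 * B₀ * (∑ j, q j * (B j / A j))
        + (1 - A₀) * ((∑ j, q j * (B j / A j)) ^ 2
            + ∑ j, q j * ((2 * C * A j - (B j) ^ 2) / (A j) ^ 2))) := by
  set Q : Fin n → ℝ → ℝ := fun j t => A j + B j * t + C * t ^ 2 with hQdef
  set S : ℝ → ℝ := fun t => ∑ j, q j * Real.log (Q j t) with hSdef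
  set DS : ℝ → ℝ := fun t => ∑ j, q j * ((B j + 2 * C * t) / Q j t) with hDSdef
  set u : ℝ → ℝ := fun t => 1 - (A₀ + B₀ * t + t ^ 2) with hudef
  set ψ : ℝ → ℝ := fun t => u t * Real.exp (S t) with hψdef
  set ψ' : ℝ → ℝ := fun t => (-(B₀ + 2 * t)) * Real.exp (S t)
      + u t * (Real.exp (S t) * DS t) with hψ'def
  set φ : ℝ → ℝ := fun t => u t * ∏ j, (Q j t) ^ (q j) with hφdef
  have hQ0 : ∀ j, Q j 0 = A j := by intro j; simp [hQdef]
  have hQcont : ∀ j, Continuous (Q j) := by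
    intro j
    exact (continuous_const.add (continuous_const.mul continuous_id)).add
      (continuous_const.mul (continuous_pow 2))
  have hQpos : ∀ᶠ t in nhds (0:ℝ), ∀ j, 0 < Q j t := by
    rw [eventually_all]
    intro j
    have := (hQcont j).continuousAt (x := (0:ℝ))
    rw [ContinuousAt, hQ0 j] at this
    exact this.eventually (eventually_gt_nhds (hA j))
  have hprod_exp : ∀ t, (∀ j, 0 < Q j t) →
      (∏ j, (Q j t) ^ (q j)) = Real.exp (S t) := by
    intro t ht
    rw [hSdef, Real.exp_sum]
    refine Finset.prod_congr rfl fun j _ => ?_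
    rw [Real.rpow_def_of_pos (ht j), mul_comm]
  have heq : φ =ᶠ[nhds (0:ℝ)] ψ := by
    filter_upwards [hQpos] with t ht
    rw [hφdef, hψdef]
    simp only
    rw [hprod_exp t ht]
  have hS : ∀ t, (∀ j, 0 < Q j t) → HasDerivAt S (DS t) t := by
    intro t ht
    rw [hSdef, hDSdef]
    apply HasDerivAt.fun_sum
    intro j _
    have h1 : HasDerivAt (Q j) (B j + 2 * C * t) t := quad_hasDerivAt _ _ _ _
    exact (h1.log (ht j).ne').const_mul (q j)
  have hu : ∀ t, HasDerivAt u (-(B₀ + 2 * t)) t := by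
    intro t
    have h1 := quad_hasDerivAt (1 - A₀) (-B₀) (-1) t
    have h2 : u = fun t : ℝ => (1 - A₀) + (-B₀) * t + (-1) * t ^ 2 := by
      ext x; rw [hudef]; ring
    rw [h2]
    convert h1 using 1; ring
  have hψ : ∀ t, (∀ j, 0 < Q j t) → HasDerivAt ψ (ψ' t) t := by
    intro t ht
    exact (hu t).mul ((hS t ht).exp)
  have hderiv_eq : deriv φ =ᶠ[nhds (0:ℝ)] ψ' := by
    have h1 : deriv φ =ᶠ[nhds (0:ℝ)] deriv ψ := heq.deriv
    have h2 : deriv ψ =ᶠ[nhds (0:ℝ)] ψ' := by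
      filter_upwards [hQpos] with t ht
      exact (hψ t ht).deriv
    exact h1.trans h2
  have h2iter : iteratedDeriv 2 φ 0 = deriv (deriv φ) 0 := by
    simp [iteratedDeriv_succ, iteratedDeriv_zero]
  rw [h2iter, hderiv_eq.deriv_eq]
  have hQ00 : ∀ j, 0 < Q j 0 := fun j => by rw [hQ0 j]; exact hA j
  set e : ℝ := Real.exp (S 0) with hedef
  set S1 : ℝ := DS 0 with hS1def
  set S2 : ℝ := ∑ j, q j * ((2 * C * A j - (B j) ^ 2) / (A j) ^ 2) with hS2def
  have hDS0 : HasDerivAt DS S2 0 := by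
    rw [hDSdef, hS2def]
    apply HasDerivAt.fun_sum
    intro j _
    have hnum : HasDerivAt (fun t : ℝ => B j + 2 * C * t) (2 * C) 0 := by
      simpa using (hasDerivAt_id (0:ℝ)).const_mul (2*C) |>.const_add (B j)
    have hden : HasDerivAt (Q j) (B j + 2 * C * 0) 0 := quad_hasDerivAt _ _ _ _
    have := (hnum.div hden (hQ00 j).ne')
    refine HasDerivAt.const_mul (q j) ?_
    convert this using 1
    · rfl
    · rw [hQ0 j]; ring
  have hexp0 : HasDerivAt (fun t => Real.exp (S t)) (e * S1) 0 := (hS 0 hQ00).exp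
  have ht1 : HasDerivAt (fun t : ℝ => -(B₀ + 2 * t)) (-2) 0 := by
    have := ((hasDerivAt_id (0:ℝ)).const_mul 2).const_add B₀
    convert quad_hasDerivAt (-B₀) (-2) 0 0 using 1
    · funext t; ring
    · ring
  have hψ'deriv : HasDerivAt ψ'
      ((-2) * e + (-(B₀ + 2*0)) * (e * S1)
        + ((-(B₀ + 2*0)) * (e * S1) + u 0 * ((e * S1) * S1 + e * S2))) 0 := by
    rw [hψ'def]
    exact (ht1.mul hexp0).add ((hu 0).mul (hexp0.mul hDS0))
  rw [hψ'deriv.deriv]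
  have hu0 : u 0 = 1 - A₀ := by simp [hudef]
  have hS1v : S1 = ∑ j, q j * (B j / A j) := by
    rw [hS1def, hDSdef]
    exact Finset.sum_congr rfl fun j _ => by rw [hQ0 j]; ring_nf
  have hev : e = ∏ j, (A j) ^ (q j) := by
    rw [hedef, ← hprod_exp 0 hQ00]
    exact (Finset.prod_congr rfl fun j _ => by rw [hQ0 j]).symm
  rw [hu0, hS1v.symm, hev.symm]
  ring

lemma lap_formula {n : ℕ} (η : Fin n → ℂ) (q : Fin n → ℝ) (s : ℝ) (z : ℂ)
    (ha : ∀ j, (s : ℂ) * z - η j ≠ 0) :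
    lap (fun w => (1 - ‖w‖ ^ 2) * (Rabs η q ((s : ℂ) * w)) ^ 2) z
    = (∏ j, (Complex.normSq ((s : ℂ) * z - η j)) ^ (q j)) *
        (-4 - 8 * s * (z.re * (∑ j, q j * (((s : ℂ) * z - η j).re / Complex.normSq ((s : ℂ) * z - η j)))
                        + z.im * (∑ j, q j * (((s : ℂ) * z - η j).im / Complex.normSq ((s : ℂ) * z - η j))))
          + (1 - Complex.normSq z) * (4 * s ^ 2 *
              ((∑ j, q j * (((s : ℂ) * z - η j).re / Complex.normSq ((s : ℂ) * z - η j))) ^ 2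
               + (∑ j, q j * (((s : ℂ) * z - η j).im / Complex.normSq ((s : ℂ) * z - η j))) ^ 2))) := by
  have hA : ∀ j, 0 < Complex.normSq ((s : ℂ) * z - η j) :=
    fun j => Complex.normSq_pos.mpr (ha j)
  set A : Fin n → ℝ := fun j => Complex.normSq ((s : ℂ) * z - η j) with hAdef
  set B1 : Fin n → ℝ := fun j => 2 * s * ((s : ℂ) * z - η j).re with hB1def
  set B2 : Fin n → ℝ := fun j => 2 * s * ((s : ℂ) * z - η j).im with hB2def
  have h1eq : (fun t : ℝ => (1 - ‖z + (t : ℂ)‖ ^ 2) *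
        (Rabs η q ((s : ℂ) * (z + (t : ℂ)))) ^ 2)
      = fun t : ℝ => (1 - (Complex.normSq z + (2 * z.re) * t + t ^ 2)) *
        ∏ j, (A j + B1 j * t + s ^ 2 * t ^ 2) ^ (q j) := by
    funext t
    rw [Complex.sq_norm, Rabs_sq]
    congr 1
    · congr 1
      simp [Complex.normSq_apply, Complex.add_re, Complex.add_im]
      ring
    · refine Finset.prod_congr rfl fun j _ => ?_
      congr 1
      simp only [hAdef, hB1def, Complex.normSq_apply, Complex.sub_re, Complex.sub_im,
        Complex.add_re, Complex.add_im, Complex.mul_re, Complex.mul_im,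
        Complex.ofReal_re, Complex.ofReal_im]
      ring
  have h2eq : (fun t : ℝ => (1 - ‖z + (t : ℂ) * Complex.I‖ ^ 2) *
        (Rabs η q ((s : ℂ) * (z + (t : ℂ) * Complex.I))) ^ 2)
      = fun t : ℝ => (1 - (Complex.normSq z + (2 * z.im) * t + t ^ 2)) *
        ∏ j, (A j + B2 j * t + s ^ 2 * t ^ 2) ^ (q j) := by
    funext t
    rw [Complex.sq_norm, Rabs_sq]
    congr 1
    · congr 1
      simp [Complex.normSq_apply, Complex.add_re, Complex.add_im, Complex.mul_re, Complex.mul_im]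
      ring
    · refine Finset.prod_congr rfl fun j _ => ?_
      congr 1
      simp only [hAdef, hB2def, Complex.normSq_apply, Complex.sub_re, Complex.sub_im,
        Complex.add_re, Complex.add_im, Complex.mul_re, Complex.mul_im,
        Complex.ofReal_re, Complex.ofReal_im, Complex.I_re, Complex.I_im]
      ring
  rw [lap, h1eq, h2eq, second_deriv_main q A B1 (s^2) (Complex.normSq z) (2*z.re) hA,
    second_deriv_main q A B2 (s^2) (Complex.normSq z) (2*z.im) hA]
  set X : ℝ := ∑ j, q j * (((s : ℂ) * z - η j).re / Complex.normSq ((s : ℂ) * z - η j)) with hXdef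
  set Y : ℝ := ∑ j, q j * (((s : ℂ) * z - η j).im / Complex.normSq ((s : ℂ) * z - η j)) with hYdef
  have hS11 : ∑ j, q j * (B1 j / A j) = 2 * s * X := by
    rw [hXdef, Finset.mul_sum]
    exact Finset.sum_congr rfl fun j _ => by rw [hB1def, hAdef]; ring
  have hS12 : ∑ j, q j * (B2 j / A j) = 2 * s * Y := by
    rw [hYdef, Finset.mul_sum]
    exact Finset.sum_congr rfl fun j _ => by rw [hB2def, hAdef]; ring
  have hzero : (∑ j, q j * ((2 * s ^ 2 * A j - (B1 j) ^ 2) / (A j) ^ 2))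
      + (∑ j, q j * ((2 * s ^ 2 * A j - (B2 j) ^ 2) / (A j) ^ 2)) = 0 := by
    rw [← Finset.sum_add_distrib]
    refine Finset.sum_eq_zero fun j _ => ?_
    have hAj : A j = ((s : ℂ) * z - η j).re ^ 2 + ((s : ℂ) * z - η j).im ^ 2 := by
      rw [hAdef]; simp [Complex.normSq_apply]; ring
    have hAne : A j ≠ 0 := (hA j).ne'
    rw [hB1def, hB2def]
    field_simp
    rw [hAj]
    simp only [Complex.sub_re, Complex.sub_im, Complex.mul_re, Complex.mul_im,
      Complex.ofReal_re, Complex.ofReal_im]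
    ring
  have hS2' : (∑ j, q j * ((2 * s ^ 2 * A j - (B2 j) ^ 2) / (A j) ^ 2))
      = -(∑ j, q j * ((2 * s ^ 2 * A j - (B1 j) ^ 2) / (A j) ^ 2)) := by linarith
  rw [hS11, hS12, hS2']
  ring

set_option maxHeartbeats 1000000 in
lemma lap_bound {n : ℕ} (η : Fin n → ℂ) (q : Fin n → ℝ) (s : ℝ) (z : ℂ)
    (hη : ∀ j, ‖η j‖ = 1) (hs0 : 0 ≤ s) (hs1 : s < 1)
    (hz : ‖z‖ ≤ 1) :
    (∏ j, (Complex.normSq ((s : ℂ) * z - η j)) ^ (q j)) *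
        (-4 - 8 * s * (z.re * (∑ j, q j * (((s : ℂ) * z - η j).re / Complex.normSq ((s : ℂ) * z - η j)))
                        + z.im * (∑ j, q j * (((s : ℂ) * z - η j).im / Complex.normSq ((s : ℂ) * z - η j))))
          + (1 - Complex.normSq z) * (4 * s ^ 2 *
              ((∑ j, q j * (((s : ℂ) * z - η j).re / Complex.normSq ((s : ℂ) * z - η j))) ^ 2
               + (∑ j, q j * (((s : ℂ) * z - η j).im / Complex.normSq ((s : ℂ) * z - η j))) ^ 2)))
    ≤ 8 * ((∑ j, |q j|) + 1) *
        ((∑ j, |q j| * (‖(s : ℂ) * z - η j‖)⁻¹) *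
          ∏ j, (Complex.normSq ((s : ℂ) * z - η j)) ^ (q j)) := by
  have habs_lb : ∀ j, 1 - ‖z‖ ≤ ‖(s : ℂ) * z - η j‖ := by
    intro j
    have h1 : ‖η j‖ - ‖(s : ℂ) * z‖
        ≤ ‖(s : ℂ) * z - η j‖ := by
      rw [← norm_neg ((s : ℂ) * z - η j), neg_sub]
      exact norm_sub_norm_le (η j) ((s : ℂ) * z)
    have h2 : ‖(s : ℂ) * z‖ ≤ ‖z‖ := by
      rw [norm_mul, Complex.norm_real, Real.norm_eq_abs, _root_.abs_of_nonneg hs0]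
      nlinarith [norm_nonneg z]
    rw [hη j] at h1; linarith
  have habspos : ∀ j, 0 < ‖(s : ℂ) * z - η j‖ := by
    intro j
    have h1 : ‖η j‖ - ‖(s : ℂ) * z‖
        ≤ ‖(s : ℂ) * z - η j‖ := by
      rw [← norm_neg ((s : ℂ) * z - η j), neg_sub]
      exact norm_sub_norm_le (η j) ((s : ℂ) * z)
    have h2 : ‖(s : ℂ) * z‖ ≤ s := by
      rw [norm_mul, Complex.norm_real, Real.norm_eq_abs, _root_.abs_of_nonneg hs0]
      nlinarith [norm_nonneg z]
    rw [hη j] at h1; linarith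
  have hane : ∀ j, (s : ℂ) * z - η j ≠ 0 := fun j => by
    intro h; have := habspos j; rw [h] at this; simp at this
  have hAnspos : ∀ j, 0 < Complex.normSq ((s : ℂ) * z - η j) :=
    fun j => Complex.normSq_pos.mpr (hane j)
  set X : ℝ := ∑ j, q j * (((s : ℂ) * z - η j).re / Complex.normSq ((s : ℂ) * z - η j)) with hXdef
  set Y : ℝ := ∑ j, q j * (((s : ℂ) * z - η j).im / Complex.normSq ((s : ℂ) * z - η j)) with hYdef
  set γ : ℝ := ∑ j, |q j| * (‖(s : ℂ) * z - η j‖)⁻¹ with hγdef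
  set P0 : ℝ := ∏ j, (Complex.normSq ((s : ℂ) * z - η j)) ^ (q j) with hP0def
  have hγ0 : 0 ≤ γ := Finset.sum_nonneg fun j _ =>
    mul_nonneg (abs_nonneg _) (inv_nonneg.mpr (norm_nonneg _))
  have hP00 : 0 ≤ P0 := Finset.prod_nonneg fun j _ =>
    Real.rpow_nonneg (Complex.normSq_nonneg _) _
  set c : ℂ := ∑ j, ((q j / Complex.normSq ((s : ℂ) * z - η j) : ℝ) : ℂ) * ((s : ℂ) * z - η j)
    with hcdef
  have hcre : c.re = X := by
    rw [hcdef, hXdef, Complex.re_sum]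
    exact Finset.sum_congr rfl fun j _ => by
      simp [Complex.mul_re]; ring
  have hcim : c.im = Y := by
    rw [hcdef, hYdef, Complex.im_sum]
    exact Finset.sum_congr rfl fun j _ => by
      simp [Complex.mul_im]; ring
  have hcabs : ‖c‖ ≤ γ := by
    rw [hcdef, hγdef]
    refine le_trans (norm_sum_le _ _) (Finset.sum_le_sum fun j _ => ?_)
    rw [norm_mul, Complex.norm_real, Real.norm_eq_abs, abs_div, _root_.abs_of_pos (hAnspos j), ← Complex.sq_norm]
    have hne := (habspos j).ne'
    apply le_of_eq
    field_simp
  have hW : |z.re * X + z.im * Y| ≤ γ := by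
    have h1 : z.re * X + z.im * Y = ((starRingEnd ℂ) z * c).re := by
      rw [Complex.mul_re]; simp [hcre, hcim]
    rw [h1]
    calc |((starRingEnd ℂ) z * c).re| ≤ ‖(starRingEnd ℂ) z * c‖ :=
          Complex.abs_re_le_norm _
      _ = ‖z‖ * ‖c‖ := by rw [norm_mul, Complex.norm_conj]
      _ ≤ 1 * γ := mul_le_mul hz hcabs (norm_nonneg _) zero_le_one
      _ = γ := one_mul γ
  have hXY : X ^ 2 + Y ^ 2 ≤ γ ^ 2 := by
    have h1 : X ^ 2 + Y ^ 2 = (‖c‖) ^ 2 := by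
      rw [Complex.sq_norm, Complex.normSq_apply, hcre, hcim]; ring
    rw [h1]
    exact pow_le_pow_left₀ (norm_nonneg _) hcabs 2
  have hA₀ : Complex.normSq z ≤ 1 := by
    rw [← Complex.sq_norm]; nlinarith [norm_nonneg z]
  have hA₀0 : 0 ≤ 1 - Complex.normSq z := by linarith
  have hkey3 : (1 - Complex.normSq z) * γ ≤ 2 * ∑ j, |q j| := by
    rw [hγdef, Finset.mul_sum, Finset.mul_sum]
    refine Finset.sum_le_sum fun j _ => ?_
    have h1 : 1 - Complex.normSq z ≤ 2 * ‖(s : ℂ) * z - η j‖ := by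
      have := habs_lb j
      rw [← Complex.sq_norm]
      nlinarith [norm_nonneg z]
    have hne := (habspos j).ne'
    calc (1 - Complex.normSq z) * (|q j| * (‖(s : ℂ) * z - η j‖)⁻¹)
        ≤ (2 * ‖(s : ℂ) * z - η j‖) *
            (|q j| * (‖(s : ℂ) * z - η j‖)⁻¹) := by
          apply mul_le_mul_of_nonneg_right h1
          exact mul_nonneg (abs_nonneg _) (inv_nonneg.mpr (norm_nonneg _))
      _ = 2 * |q j| := by field_simp
  have hs1' : s ≤ 1 := hs1.le
  have hinner : -4 - 8 * s * (z.re * X + z.im * Y)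
      + (1 - Complex.normSq z) * (4 * s ^ 2 * (X ^ 2 + Y ^ 2))
      ≤ 8 * ((∑ j, |q j|) + 1) * γ := by
    have e1 : -(8 * s * (z.re * X + z.im * Y)) ≤ 8 * γ := by
      nlinarith [abs_le.mp hW]
    have e2 : (1 - Complex.normSq z) * (4 * s ^ 2 * (X ^ 2 + Y ^ 2))
        ≤ 8 * (∑ j, |q j|) * γ := by
      have h1 : (1 - Complex.normSq z) * (X ^ 2 + Y ^ 2) ≤ ((1 - Complex.normSq z) * γ) * γ := by
        nlinarith
      have h2 : ((1 - Complex.normSq z) * γ) * γ ≤ (2 * ∑ j, |q j|) * γ :=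
        mul_le_mul_of_nonneg_right hkey3 hγ0
      have h3 : 0 ≤ (1 - Complex.normSq z) * (X ^ 2 + Y ^ 2) :=
        mul_nonneg hA₀0 (by positivity)
      have h4 : s ^ 2 ≤ 1 := by nlinarith
      have h5 : 0 ≤ (2 * ∑ j, |q j|) * γ := le_trans h3 (h1.trans h2)
      calc (1 - Complex.normSq z) * (4 * s ^ 2 * (X ^ 2 + Y ^ 2))
          = (4 * s ^ 2) * ((1 - Complex.normSq z) * (X ^ 2 + Y ^ 2)) := by ring
        _ ≤ (4 * s ^ 2) * ((2 * ∑ j, |q j|) * γ) := by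
            apply mul_le_mul_of_nonneg_left (h1.trans h2) (by positivity)
        _ ≤ 4 * ((2 * ∑ j, |q j|) * γ) := mul_le_mul_of_nonneg_right (by linarith) h5
        _ = 8 * (∑ j, |q j|) * γ := by ring
    linarith
  calc P0 * (-4 - 8 * s * (z.re * X + z.im * Y)
        + (1 - Complex.normSq z) * (4 * s ^ 2 * (X ^ 2 + Y ^ 2)))
      ≤ P0 * (8 * ((∑ j, |q j|) + 1) * γ) := mul_le_mul_of_nonneg_left hinner hP00
    _ = 8 * ((∑ j, |q j|) + 1) * (γ * P0) := by ring

end Stmt6Aux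

open Stmt6Aux in
theorem stmt_6 {n : ℕ} (η : Fin n → ℂ) (hη : ∀ j, ‖η j‖ = 1)
    (hinj : Function.Injective η) (q : Fin n → ℝ)
    (f : ℂ → ℂ) (hf : DifferentiableOn ℂ f (ball 0 1))
    (s : ℝ) (hs0 : 0 ≤ s) (hs1 : s < 1) :
    (∫ z in ball (0 : ℂ) 1,
        logPlus (‖f ((s : ℂ) * z)‖) *
          lap (fun w => (1 - ‖w‖ ^ 2) * (Rabs η q ((s : ℂ) * w)) ^ 2) z) +
      (2 * ∫ θ in (0 : ℝ)..(2 * Real.pi),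
        (Rabs η q ((s : ℂ) * Complex.exp ((θ : ℂ) * Complex.I))) ^ 2 *
          logPlus (‖f ((s : ℂ) * Complex.exp ((θ : ℂ) * Complex.I))‖))
      ≤ 8 * ((∑ j, |q j|) + 1) *
          (∫ z in ball (0 : ℂ) 1,
            (∑ j, |q j| * (‖(s : ℂ) * z - η j‖)⁻¹) * (Rabs η q ((s : ℂ) * z)) ^ 2 *
              logPlus (‖f ((s : ℂ) * z)‖)) +
        (2 * ∫ θ in (0 : ℝ)..(2 * Real.pi),
        (Rabs η q ((s : ℂ) * Complex.exp ((θ : ℂ) * Complex.I))) ^ 2 *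
          logPlus (‖f ((s : ℂ) * Complex.exp ((θ : ℂ) * Complex.I))‖)) := by
  have key : (∫ z in ball (0 : ℂ) 1,
        logPlus (‖f ((s : ℂ) * z)‖) *
          lap (fun w => (1 - ‖w‖ ^ 2) * (Rabs η q ((s : ℂ) * w)) ^ 2) z)
      ≤ 8 * ((∑ j, |q j|) + 1) *
          (∫ z in ball (0 : ℂ) 1,
            (∑ j, |q j| * (‖(s : ℂ) * z - η j‖)⁻¹) * (Rabs η q ((s : ℂ) * z)) ^ 2 *
              logPlus (‖f ((s : ℂ) * z)‖)) := by
    -- abbreviations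
    set L : ℂ → ℝ := fun z => logPlus (‖f ((s : ℂ) * z)‖) with hLdef
    set E : ℂ → ℝ := fun z => (∏ j, (Complex.normSq ((s : ℂ) * z - η j)) ^ (q j)) *
        (-4 - 8 * s * (z.re * (∑ j, q j * (((s : ℂ) * z - η j).re / Complex.normSq ((s : ℂ) * z - η j)))
                        + z.im * (∑ j, q j * (((s : ℂ) * z - η j).im / Complex.normSq ((s : ℂ) * z - η j))))
          + (1 - Complex.normSq z) * (4 * s ^ 2 *
              ((∑ j, q j * (((s : ℂ) * z - η j).re / Complex.normSq ((s : ℂ) * z - η j))) ^ 2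
               + (∑ j, q j * (((s : ℂ) * z - η j).im / Complex.normSq ((s : ℂ) * z - η j))) ^ 2))) with hEdef
    set G : ℂ → ℝ := fun z =>
        (∑ j, |q j| * (‖(s : ℂ) * z - η j‖)⁻¹) * (Rabs η q ((s : ℂ) * z)) ^ 2 *
          logPlus (‖f ((s : ℂ) * z)‖) with hGdef
    set K : Set ℂ := closedBall (0 : ℂ) 1 with hKdef
    -- basic nonvanishing facts on K
    have hzK : ∀ z ∈ K, ‖z‖ ≤ 1 := by
      intro z hz
      rw [hKdef, mem_closedBall_zero_iff] at hz
      exact hz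
    have hane : ∀ (z : ℂ), ‖z‖ ≤ 1 → ∀ j, (s : ℂ) * z - η j ≠ 0 := by
      intro z hz j hzero
      have h1 : ‖(s : ℂ) * z‖ = 1 := by
        have : (s : ℂ) * z = η j := by linear_combination hzero
        rw [this, hη j]
      rw [norm_mul, Complex.norm_real, Real.norm_eq_abs, _root_.abs_of_nonneg hs0] at h1
      nlinarith [norm_nonneg z]
    have haneK : ∀ z ∈ K, ∀ j, (s : ℂ) * z - η j ≠ 0 := fun z hz => hane z (hzK z hz)
    have hNSne : ∀ j, ∀ z ∈ K, Complex.normSq ((s : ℂ) * z - η j) ≠ 0 :=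
      fun j z hz => (Complex.normSq_pos.mpr (haneK z hz j)).ne'
    -- continuity facts
    have hacont : ∀ j, Continuous (fun z : ℂ => (s : ℂ) * z - η j) :=
      fun j => (continuous_const.mul continuous_id).sub continuous_const
    have hmaps : MapsTo (fun z : ℂ => (s : ℂ) * z) K (ball (0 : ℂ) 1) := by
      intro z hz
      rw [mem_ball_zero_iff]
      rw [norm_mul, Complex.norm_real, Real.norm_eq_abs, _root_.abs_of_nonneg hs0]
      have := hzK z hz
      nlinarith [norm_nonneg z]
    have hfc : ContinuousOn (fun z : ℂ => f ((s : ℂ) * z)) K :=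
      hf.continuousOn.comp (continuous_const.mul continuous_id).continuousOn hmaps
    have hLeq : L = fun z => Real.log (max (‖f ((s : ℂ) * z)‖) 1) := by
      funext z
      rw [hLdef]
      exact logPlus_eq (norm_nonneg _)
    have hLcont : ContinuousOn L K := by
      rw [hLeq]
      refine ContinuousOn.log ?_ ?_
      · exact (continuous_id.max continuous_const).comp_continuousOn
          (continuous_norm.comp_continuousOn hfc)
      · intro z _
        exact ne_of_gt (lt_of_lt_of_le zero_lt_one (le_max_right _ _))
    have hXcont : ContinuousOn (fun z : ℂ =>
        ∑ j, q j * (((s : ℂ) * z - η j).re / Complex.normSq ((s : ℂ) * z - η j))) K := by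
      refine continuousOn_finset_sum _ fun j _ => continuousOn_const.mul ?_
      exact ((Complex.continuous_re.comp (hacont j)).continuousOn).div
        ((Complex.continuous_normSq.comp (hacont j)).continuousOn) (hNSne j)
    have hYcont : ContinuousOn (fun z : ℂ =>
        ∑ j, q j * (((s : ℂ) * z - η j).im / Complex.normSq ((s : ℂ) * z - η j))) K := by
      refine continuousOn_finset_sum _ fun j _ => continuousOn_const.mul ?_
      exact ((Complex.continuous_im.comp (hacont j)).continuousOn).div
        ((Complex.continuous_normSq.comp (hacont j)).continuousOn) (hNSne j)
    have hP0cont : ContinuousOn (fun z : ℂ =>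
        ∏ j, (Complex.normSq ((s : ℂ) * z - η j)) ^ (q j)) K := by
      refine continuousOn_finset_prod _ fun j _ => ?_
      exact ContinuousOn.rpow_const ((Complex.continuous_normSq.comp (hacont j)).continuousOn)
        (fun z hz => Or.inl (hNSne j z hz))
    have hEcont : ContinuousOn E K := by
      rw [hEdef]
      refine hP0cont.mul ?_
      refine ContinuousOn.add ?_ ?_
      · refine continuousOn_const.sub (continuousOn_const.mul ?_)
        exact (Complex.continuous_re.continuousOn.mul hXcont).add
          (Complex.continuous_im.continuousOn.mul hYcont)
      · refine (continuousOn_const.sub Complex.continuous_normSq.continuousOn).mul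
          (continuousOn_const.mul ?_)
        exact (hXcont.pow 2).add (hYcont.pow 2)
    have hγcont : ContinuousOn (fun z : ℂ =>
        ∑ j, |q j| * (‖(s : ℂ) * z - η j‖)⁻¹) K := by
      refine continuousOn_finset_sum _ fun j _ => continuousOn_const.mul ?_
      refine ContinuousOn.inv₀ (continuous_norm.comp (hacont j)).continuousOn ?_
      intro z hz
      exact norm_ne_zero_iff.mpr (haneK z hz j)
    have hGcont : ContinuousOn G K := by
      have hGeq : G = fun z => ((∑ j, |q j| * (‖(s : ℂ) * z - η j‖)⁻¹) *
          ∏ j, (Complex.normSq ((s : ℂ) * z - η j)) ^ (q j)) * L z := by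
        funext z
        rw [hGdef, hLdef]
        simp only
        rw [Rabs_sq]
      rw [hGeq]
      exact (hγcont.mul hP0cont).mul hLcont
    -- integrability
    have hIntLE : IntegrableOn (fun z => L z * E z) (ball (0 : ℂ) 1) := by
      refine IntegrableOn.mono_set ?_ ball_subset_closedBall
      exact (hLcont.mul hEcont).integrableOn_compact (isCompact_closedBall _ _)
    have hIntG : IntegrableOn (fun z => 8 * ((∑ j, |q j|) + 1) * G z) (ball (0 : ℂ) 1) := by
      refine IntegrableOn.mono_set ?_ ball_subset_closedBall
      exact (continuousOn_const.mul hGcont).integrableOn_compact (isCompact_closedBall _ _)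
    -- pointwise equality on the ball
    have heqon : EqOn (fun z => logPlus (‖f ((s : ℂ) * z)‖) *
          lap (fun w => (1 - ‖w‖ ^ 2) * (Rabs η q ((s : ℂ) * w)) ^ 2) z)
        (fun z => L z * E z) (ball (0 : ℂ) 1) := by
      intro z hz
      have hz1 : ‖z‖ ≤ 1 := by
        rw [mem_ball_zero_iff] at hz
        exact le_of_lt hz
      simp only
      rw [hLdef, hEdef]
      simp only
      rw [lap_formula η q s z (hane z hz1)]
    -- pointwise inequality on the ball
    have hpt : ∀ z ∈ ball (0 : ℂ) 1, L z * E z ≤ 8 * ((∑ j, |q j|) + 1) * G z := by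
      intro z hz
      have hz1 : ‖z‖ ≤ 1 := by
        rw [mem_ball_zero_iff] at hz
        exact le_of_lt hz
      have hL0 : 0 ≤ L z := le_max_right _ _
      have hb := lap_bound η q s z hη hs0 hs1 hz1
      calc L z * E z ≤ L z * (8 * ((∑ j, |q j|) + 1) *
            ((∑ j, |q j| * (‖(s : ℂ) * z - η j‖)⁻¹) *
              ∏ j, (Complex.normSq ((s : ℂ) * z - η j)) ^ (q j))) := by
            exact mul_le_mul_of_nonneg_left hb hL0
        _ = 8 * ((∑ j, |q j|) + 1) * G z := by
            rw [hGdef, hLdef]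
            simp only
            rw [Rabs_sq]
            ring
    calc (∫ z in ball (0 : ℂ) 1,
          logPlus (‖f ((s : ℂ) * z)‖) *
            lap (fun w => (1 - ‖w‖ ^ 2) * (Rabs η q ((s : ℂ) * w)) ^ 2) z)
        = ∫ z in ball (0 : ℂ) 1, L z * E z :=
          setIntegral_congr_fun measurableSet_ball heqon
      _ ≤ ∫ z in ball (0 : ℂ) 1, 8 * ((∑ j, |q j|) + 1) * G z :=
          setIntegral_mono_on hIntLE hIntG measurableSet_ball hpt
      _ = 8 * ((∑ j, |q j|) + 1) * ∫ z in ball (0 : ℂ) 1, G z := by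
          rw [integral_const_mul]
  linarith [key]

end
end

section
/- Suppose the holomorphic function f on 𝔻 satisfies |f(z)| ≤ exp(D/|R(z)|) for all z ∈ 𝔻, where D > 0. For ε > 0 set |R_ε(z)| := ∏_{j=1}^n |z − η_j|^{q_j − 1 + ε}. Then for every ε > 0 there is a constant C(α,ε), depending only on ε and on the minimal separation α > 0 of the points η_1,…,η_n on 𝕋, such that sup_{0 ≤ s < 1} ∫_𝕋 |R_ε(se^{iθ})| log⁺|f(se^{iθ})| dθ ≤ D · C(α,ε). -/
open MeasureTheory Metric Complex Set ENNReal
open intervalIntegral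
open scoped Classical

noncomputable section

section Aux

/-- chord lower bound -/
lemma chord_lb {s u : ℝ} (hs0 : 0 ≤ s) (hs1 : s ≤ 1) (hu : |u| ≤ Real.pi) :
    |u| / Real.pi ≤ ‖(s : ℂ) * Complex.exp ((u : ℂ) * Complex.I) - 1‖ := by
  have hπ := Real.pi_pos
  set A := ‖(s : ℂ) * Complex.exp ((u : ℂ) * Complex.I) - 1‖ with hA
  have hA0 : 0 ≤ A := norm_nonneg _
  have hz : (s : ℂ) * Complex.exp ((u : ℂ) * Complex.I) - 1
      = ((s * Real.cos u - 1 : ℝ) : ℂ) + ((s * Real.sin u : ℝ) : ℂ) * Complex.I := by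
    rw [Complex.exp_mul_I, ← Complex.ofReal_cos, ← Complex.ofReal_sin]
    push_cast
    ring
  have hsq : A ^ 2 = s ^ 2 - 2 * s * Real.cos u + 1 := by
    rw [hA, hz, Complex.sq_norm, Complex.normSq_add_mul_I]
    have := Real.sin_sq_add_cos_sq u
    nlinarith [this]
  have hc1 : Real.cos u ≤ 1 := Real.cos_le_one u
  have hc2 : -1 ≤ Real.cos u := Real.neg_one_le_cos u
  have h1 : (1 - Real.cos u) / 2 ≤ A ^ 2 := by nlinarith [sq_nonneg (s - Real.cos u)]
  have h2 : Real.cos u ≤ 1 - 2 / Real.pi ^ 2 * u ^ 2 := Real.cos_le_one_sub_mul_cos_sq hu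
  have hp2 : (0:ℝ) < Real.pi ^ 2 := by positivity
  have h3 : (|u| / Real.pi) ^ 2 ≤ A ^ 2 := by
    rw [div_pow, _root_.sq_abs, div_le_iff₀ hp2]
    have key : 2 / Real.pi ^ 2 * u ^ 2 * Real.pi ^ 2 = 2 * u ^ 2 := by field_simp
    nlinarith [mul_le_mul_of_nonneg_right h2 hp2.le, mul_le_mul_of_nonneg_right h1 hp2.le]
  nlinarith [abs_nonneg u, div_nonneg (abs_nonneg u) hπ.le]


lemma abs_rpow_ii {r : ℝ} (hr : -1 < r) (a b : ℝ) :
    IntervalIntegrable (fun u : ℝ => |u| ^ r) volume a b := by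
  have h1 : ∀ c : ℝ, 0 ≤ c → IntervalIntegrable (fun u : ℝ => |u| ^ r) volume 0 c := by
    intro c hc
    apply (intervalIntegrable_rpow' hr (a := 0) (b := c)).congr
    rw [uIoc_of_le hc]
    intro x hx
    simp only [_root_.abs_of_nonneg hx.1.le]
  have h2 : ∀ c : ℝ, 0 ≤ c → IntervalIntegrable (fun u : ℝ => |u| ^ r) volume (-c) 0 := by
    intro c hc
    have := ((IntervalIntegrable.iff_comp_neg enorm_ne_top).mp (h1 c hc))
    simp only [abs_neg, neg_zero] at this
    exact this.symm
  set M := |a| + |b| with hM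
  have hM0 : 0 ≤ M := by positivity
  have hbig : IntervalIntegrable (fun u : ℝ => |u| ^ r) volume (-M) M :=
    (h2 M hM0).trans (h1 M hM0)
  apply hbig.mono_set
  apply uIcc_subset_uIcc <;> rw [mem_uIcc] <;> left <;>
    constructor <;>
    [ linarith [neg_abs_le a, abs_nonneg b];
      linarith [le_abs_self a, abs_nonneg b];
      linarith [neg_abs_le b, abs_nonneg a];
      linarith [le_abs_self b, abs_nonneg a]]

lemma integral_abs_rpow {r : ℝ} (hr : -1 < r) {a b : ℝ} (ha : 0 ≤ a) (hb : 0 ≤ b) :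
    ∫ u in (-a)..b, |u| ^ r = (a ^ (r + 1) + b ^ (r + 1)) / (r + 1) := by
  have hr1 : (0:ℝ) < r + 1 := by linarith
  have hpos : ∀ c : ℝ, 0 ≤ c → ∫ u in (0:ℝ)..c, |u| ^ r = c ^ (r + 1) / (r + 1) := by
    intro c hc
    rw [integral_congr (g := fun u : ℝ => u ^ r)
      (fun x hx => by
        rw [uIcc_of_le hc] at hx
        simp [_root_.abs_of_nonneg hx.1]),
      integral_rpow (Or.inl hr)]
    rw [Real.zero_rpow (by linarith)]
    ring
  have hneg : ∫ u in (-a)..(0:ℝ), |u| ^ r = a ^ (r + 1) / (r + 1) := by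
    have := integral_comp_neg (a := (0:ℝ)) (b := a) (fun u : ℝ => |u| ^ r)
    simp only [abs_neg, neg_zero] at this
    rw [← this, hpos a ha]
  rw [← integral_add_adjacent_intervals (b := (0:ℝ)) ?h1 ?h2, hneg, hpos b hb]
  · ring
  case h1 => exact abs_rpow_ii hr _ _
  case h2 => exact abs_rpow_ii hr _ _


-- basic facts
lemma base_lb {s : ℝ} (hs0 : 0 ≤ s) (hs1 : s < 1) (u : ℝ) :
    1 - s ≤ ‖(s : ℂ) * Complex.exp ((u : ℂ) * Complex.I) - 1‖ := by
  have h1 : ‖(s : ℂ) * Complex.exp ((u : ℂ) * Complex.I)‖ = s := by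
    rw [norm_mul, Complex.norm_exp_ofReal_mul_I, Complex.norm_real, Real.norm_eq_abs, _root_.abs_of_nonneg hs0, mul_one]
  calc 1 - s = ‖(1:ℂ)‖ - ‖(s : ℂ) * Complex.exp ((u : ℂ) * Complex.I)‖ := by
        rw [h1, norm_one]
    _ ≤ ‖(1:ℂ) - (s : ℂ) * Complex.exp ((u : ℂ) * Complex.I)‖ := norm_sub_norm_le _ _
    _ = ‖(s : ℂ) * Complex.exp ((u : ℂ) * Complex.I) - 1‖ := by
        rw [← norm_neg]; congr 1; ring

lemma F_cont {s ε : ℝ} (hs0 : 0 ≤ s) (hs1 : s < 1) :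
    Continuous (fun u : ℝ =>
      ‖(s : ℂ) * Complex.exp ((u : ℂ) * Complex.I) - 1‖ ^ (ε - 1)) := by
  apply Continuous.rpow_const
  · exact continuous_norm.comp <| by continuity
  · intro u
    left
    have := base_lb hs0 hs1 u
    intro h
    rw [h] at this
    linarith

lemma single_int {s ε : ℝ} (hs0 : 0 ≤ s) (hs1 : s < 1) (hε0 : 0 < ε) (hε1 : ε < 1)
    (η : ℂ) (hη : ‖η‖ = 1) :
    (∫ θ in (0:ℝ)..(2 * Real.pi),
        ‖(s : ℂ) * Complex.exp ((θ : ℂ) * Complex.I) - η‖ ^ (ε - 1))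
      ≤ Real.pi ^ (1 - ε) * (2 * (Real.pi ^ ε + (3 * Real.pi) ^ ε) / ε) := by
  have hπ := Real.pi_pos
  set θ₀ := η.arg with hθ₀def
  have hηe : η = Complex.exp ((θ₀ : ℂ) * Complex.I) := by
    conv_lhs => rw [← Complex.norm_mul_exp_arg_mul_I η]
    rw [hη, Complex.ofReal_one, one_mul]
  have hθ₀1 : -Real.pi < θ₀ := Complex.neg_pi_lt_arg η
  have hθ₀2 : θ₀ ≤ Real.pi := Complex.arg_le_pi η
  set F : ℝ → ℝ := fun u =>
    ‖(s : ℂ) * Complex.exp ((u : ℂ) * Complex.I) - 1‖ ^ (ε - 1) with hF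
  set Φ : ℝ → ℝ := fun u =>
    Real.pi ^ (1 - ε) * (|u| ^ (ε - 1) + |u - 2 * Real.pi| ^ (ε - 1)) with hΦ
  have hFnn : ∀ u, 0 ≤ F u := fun u => Real.rpow_nonneg (norm_nonneg _) _
  have hFc : Continuous F := F_cont hs0 hs1
  -- rewrite integrand
  have hshift : ∀ θ : ℝ, ‖(s : ℂ) * Complex.exp ((θ : ℂ) * Complex.I) - η‖ ^ (ε - 1)
      = F (θ - θ₀) := by
    intro θ
    have : (s : ℂ) * Complex.exp ((θ : ℂ) * Complex.I) - η
        = Complex.exp ((θ₀ : ℂ) * Complex.I) *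
          ((s : ℂ) * Complex.exp ((((θ - θ₀ : ℝ)) : ℂ) * Complex.I) - 1) := by
      rw [hηe, mul_sub, mul_one, ← mul_assoc, mul_comm (Complex.exp _) (s:ℂ), mul_assoc,
        ← Complex.exp_add]
      push_cast
      ring_nf
    rw [hF]
    simp only []
    rw [this, norm_mul, Complex.norm_exp_ofReal_mul_I, one_mul]
  have h0 : (∫ θ in (0:ℝ)..(2 * Real.pi),
      ‖(s : ℂ) * Complex.exp ((θ : ℂ) * Complex.I) - η‖ ^ (ε - 1))
      = ∫ u in (-θ₀)..(2 * Real.pi - θ₀), F u := by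
    rw [show ∫ θ in (0:ℝ)..(2 * Real.pi),
        ‖(s : ℂ) * Complex.exp ((θ : ℂ) * Complex.I) - η‖ ^ (ε - 1)
        = ∫ θ in (0:ℝ)..(2 * Real.pi), F (θ - θ₀) from integral_congr fun x _ => hshift x]
    rw [integral_comp_sub_right F θ₀, zero_sub]
  rw [h0]
  -- enlarge interval
  have hFi : ∀ a b : ℝ, IntervalIntegrable F volume a b := fun a b => hFc.intervalIntegrable a b
  have h1 : (∫ u in (-θ₀)..(2 * Real.pi - θ₀), F u) ≤ ∫ u in (-Real.pi)..(3 * Real.pi), F u := by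
    apply integral_mono_interval (by linarith) (by linarith) (by linarith)
    · filter_upwards with u using hFnn u
    · exact hFi _ _
  -- pointwise comparison core
  have hcore : ∀ v : ℝ, |v| ≤ Real.pi → v ≠ 0 →
      ‖(s : ℂ) * Complex.exp ((v : ℂ) * Complex.I) - 1‖ ^ (ε - 1)
        ≤ Real.pi ^ (1 - ε) * |v| ^ (ε - 1) := by
    intro v hv hv0
    have hb := chord_lb hs0 hs1.le hv
    have hvpos : 0 < |v| / Real.pi := by positivity
    calc ‖(s : ℂ) * Complex.exp ((v : ℂ) * Complex.I) - 1‖ ^ (ε - 1)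
        ≤ (|v| / Real.pi) ^ (ε - 1) :=
          Real.rpow_le_rpow_of_nonpos hvpos hb (by linarith)
      _ = Real.pi ^ (1 - ε) * |v| ^ (ε - 1) := by
          rw [Real.div_rpow (abs_nonneg v) hπ.le, div_eq_mul_inv, ← Real.rpow_neg hπ.le,
            mul_comm]
          norm_num
  have hΦi : IntervalIntegrable Φ volume (-Real.pi) (3 * Real.pi) := by
    apply IntervalIntegrable.const_mul
    apply IntervalIntegrable.add
    · exact abs_rpow_ii (by linarith) _ _
    · have := (abs_rpow_ii (r := ε - 1) (by linarith)
        (-Real.pi - 2 * Real.pi) (3 * Real.pi - 2 * Real.pi)).comp_sub_right (2 * Real.pi)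
      simpa using this
  have h2 : (∫ u in (-Real.pi)..(3 * Real.pi), F u) ≤ ∫ u in (-Real.pi)..(3 * Real.pi), Φ u := by
    apply integral_mono_ae_restrict (by linarith) (hFi _ _) hΦi
    have h01 : volume ({0, 2 * Real.pi} : Set ℝ) = 0 := by
      rw [Set.insert_eq]
      exact measure_union_null (measure_singleton _) (measure_singleton _)
    have hnull : ∀ᵐ u : ℝ, u ≠ 0 ∧ u ≠ 2 * Real.pi := by
      have h2' := compl_mem_ae_iff.mpr h01
      filter_upwards [h2'] with u hu
      simp only [Set.mem_compl_iff, Set.mem_insert_iff, Set.mem_singleton_iff, not_or] at hu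
      exact hu
    filter_upwards [ae_restrict_mem measurableSet_Icc, ae_restrict_of_ae hnull] with u hu hu'
    obtain ⟨hu0, hu2⟩ := hu'
    obtain ⟨hul, huu⟩ := hu
    rcases le_or_gt u Real.pi with hle | hgt
    · have habs : |u| ≤ Real.pi := abs_le.mpr ⟨by linarith, hle⟩
      calc F u ≤ Real.pi ^ (1 - ε) * |u| ^ (ε - 1) := hcore u habs hu0
        _ ≤ Φ u := by
            have heq : Φ u = Real.pi ^ (1 - ε) * (|u| ^ (ε - 1) + |u - 2 * Real.pi| ^ (ε - 1)) := rfl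
            have h1' : (0:ℝ) ≤ |u - 2 * Real.pi| ^ (ε - 1) := Real.rpow_nonneg (abs_nonneg _) _
            have hπ' : (0:ℝ) ≤ Real.pi ^ (1 - ε) := Real.rpow_nonneg hπ.le _
            rw [heq]
            nlinarith [mul_nonneg hπ' h1']
    · set v := u - 2 * Real.pi with hv
      have hvabs : |v| ≤ Real.pi := abs_le.mpr ⟨by simp only [hv]; linarith, by simp only [hv]; linarith⟩
      have hv0 : v ≠ 0 := fun h => hu2 (by linarith [sub_eq_zero.mp h])
      have hFuv : F u = ‖(s : ℂ) * Complex.exp ((v : ℂ) * Complex.I) - 1‖ ^ (ε - 1) := by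
        rw [hF]
        simp only []
        congr 3
        rw [show u = v + 2 * Real.pi by rw [hv]; ring]
        push_cast
        rw [add_mul, Complex.exp_add, Complex.exp_two_pi_mul_I, mul_one]
      calc F u ≤ Real.pi ^ (1 - ε) * |v| ^ (ε - 1) := by rw [hFuv]; exact hcore v hvabs hv0
        _ ≤ Φ u := by
            have heq : Φ u = Real.pi ^ (1 - ε) * (|u| ^ (ε - 1) + |u - 2 * Real.pi| ^ (ε - 1)) := rfl
            have h1' : (0:ℝ) ≤ |u| ^ (ε - 1) := Real.rpow_nonneg (abs_nonneg _) _
            have hπ' : (0:ℝ) ≤ Real.pi ^ (1 - ε) := Real.rpow_nonneg hπ.le _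
            have hveq : |v| ^ (ε - 1) = |u - 2 * Real.pi| ^ (ε - 1) := by rw [hv]
            rw [heq, ← hveq]
            nlinarith [mul_nonneg hπ' h1']
  -- compute ∫ Φ
  have h3 : (∫ u in (-Real.pi)..(3 * Real.pi), Φ u)
      = Real.pi ^ (1 - ε) * (2 * (Real.pi ^ ε + (3 * Real.pi) ^ ε) / ε) := by
    rw [hΦ]
    rw [intervalIntegral.integral_const_mul]
    congr 1
    rw [integral_add (abs_rpow_ii (by linarith) _ _) ?hint]
    case hint =>
      have := (abs_rpow_ii (r := ε - 1) (by linarith)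
        (-Real.pi - 2 * Real.pi) (3 * Real.pi - 2 * Real.pi)).comp_sub_right (2 * Real.pi)
      simpa using this
    have e1 : (∫ u in (-Real.pi)..(3 * Real.pi), |u| ^ (ε - 1))
        = (Real.pi ^ ε + (3 * Real.pi) ^ ε) / ε := by
      have := integral_abs_rpow (r := ε - 1) (by linarith) hπ.le
        (b := 3 * Real.pi) (by linarith)
      simpa using this
    have e2 : (∫ u in (-Real.pi)..(3 * Real.pi), |u - 2 * Real.pi| ^ (ε - 1))
        = ((3 * Real.pi) ^ ε + Real.pi ^ ε) / ε := by
      rw [integral_comp_sub_right (fun v => |v| ^ (ε - 1)) (2 * Real.pi)]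
      rw [show -Real.pi - 2 * Real.pi = -(3 * Real.pi) by ring]
      have := integral_abs_rpow (r := ε - 1) (by linarith) (a := 3 * Real.pi) (by linarith)
        (b := 3 * Real.pi - 2 * Real.pi) (by linarith)
      rw [this]
      rw [show 3 * Real.pi - 2 * Real.pi = Real.pi by ring]
      ring_nf
    rw [e1, e2]
    ring
  linarith [h1, h2, h3.le, h3.ge]

end Aux

theorem stmt_10 (n : ℕ) (ε : ℝ) (hε : 0 < ε) (α : ℝ) (hα : 0 < α) :
    ∃ C : ℝ, 0 < C ∧
      ∀ η : Fin n → ℂ, (∀ j, ‖η j‖ = 1) →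
        (∀ j k, j ≠ k → α ≤ ‖η j - η k‖) →
      ∀ q : Fin n → ℝ, ∀ D : ℝ, 0 < D →
      ∀ f : ℂ → ℂ, DifferentiableOn ℂ f (ball 0 1) →
        (∀ z ∈ ball (0 : ℂ) 1, ‖f z‖ ≤ Real.exp (D / Rabs η q z)) →
      ∀ s : ℝ, 0 ≤ s → s < 1 →
        (∫ θ in (0 : ℝ)..(2 * Real.pi),
            Rabs η (fun j => q j - 1 + ε) ((s : ℂ) * Complex.exp ((θ : ℂ) * Complex.I)) *
              logPlus ‖f ((s : ℂ) * Complex.exp ((θ : ℂ) * Complex.I))‖)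
          ≤ D * C := by
  have hπ := Real.pi_pos
  set β := min (α / 4) 1 with hβdef
  have hβ : 0 < β := lt_min (by linarith) one_pos
  set K := max 1 (max ((2:ℝ) ^ (ε - 1)) (β ^ (ε - 1))) with hKdef
  have hK1 : (1:ℝ) ≤ K := le_max_left _ _
  have hK0 : (0:ℝ) < K := lt_of_lt_of_le one_pos hK1
  set Bs := Real.pi ^ (1 - ε) * (2 * (Real.pi ^ ε + (3 * Real.pi) ^ ε) / ε) with hBdef
  have hBs : 0 < Bs := by
    apply mul_pos (Real.rpow_pos_of_pos hπ _)
    apply div_pos _ hε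
    have := Real.rpow_pos_of_pos hπ ε
    have := Real.rpow_pos_of_pos (show (0:ℝ) < 3 * Real.pi by linarith) ε
    linarith
  set C := 2 * Real.pi * K ^ n + K ^ (n - 1) * n * Bs with hCdef
  have hC2 : 0 ≤ K ^ (n - 1) * n * Bs := by positivity
  have hCpos : 0 < C := by
    have h1 : 0 < 2 * Real.pi * K ^ n := by positivity
    rw [hCdef]; linarith
  refine ⟨C, hCpos, ?_⟩
  intro η hη hsep q D hD f hf hb s hs0 hs1
  set z : ℝ → ℂ := fun θ => (s : ℂ) * Complex.exp ((θ : ℂ) * Complex.I) with hzdef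
  have hzabs : ∀ θ : ℝ, ‖z θ‖ = s := by
    intro θ
    rw [hzdef]
    simp only []
    rw [norm_mul, Complex.norm_real, Real.norm_eq_abs, Complex.norm_exp_ofReal_mul_I, mul_one, _root_.abs_of_nonneg hs0]
  have hzmem : ∀ θ : ℝ, z θ ∈ ball (0:ℂ) 1 := by
    intro θ
    rw [mem_ball, dist_zero_right, hzabs θ]
    exact hs1
  have ha_lb : ∀ (θ : ℝ) (j : Fin n), 1 - s ≤ ‖z θ - η j‖ := by
    intro θ j
    have h1 : ‖z θ - η j‖ = ‖η j - z θ‖ := by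
      rw [norm_sub_rev]
    rw [h1]
    calc 1 - s = ‖η j‖ - ‖z θ‖ := by
          rw [hη j, hzabs θ]
      _ ≤ ‖η j - z θ‖ := norm_sub_norm_le _ _
  have ha_pos : ∀ (θ : ℝ) (j : Fin n), 0 < ‖z θ - η j‖ := fun θ j =>
    lt_of_lt_of_le (by linarith) (ha_lb θ j)
  have ha_ub : ∀ (θ : ℝ) (j : Fin n), ‖z θ - η j‖ ≤ 2 := by
    intro θ j
    calc ‖z θ - η j‖ = ‖z θ - η j‖ := rfl
      _ ≤ ‖z θ‖ + ‖η j‖ := norm_sub_le _ _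
      _ ≤ 2 := by
          rw [hzabs θ, hη j]; linarith
  have hzc : Continuous z := by
    rw [hzdef]
    exact continuous_const.mul (Complex.continuous_exp.comp
      (Complex.continuous_ofReal.mul continuous_const))
  have hac : ∀ j : Fin n, Continuous fun θ => ‖z θ - η j‖ := fun j =>
    continuous_norm.comp (hzc.sub continuous_const)
  set W : ℝ → ℝ := fun θ => ∏ j, ‖z θ - η j‖ ^ (ε - 1) with hW
  have harpc : ∀ (j : Fin n) (r : ℝ), Continuous fun θ => ‖z θ - η j‖ ^ r :=
    fun j r => (hac j).rpow_const fun θ => Or.inl (ha_pos θ j).ne'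
  have hWc : Continuous W := by
    rw [hW]; exact continuous_finset_prod _ fun j _ => harpc j (ε - 1)
  have hanng : ∀ (θ : ℝ) (j : Fin n) (r : ℝ), 0 ≤ ‖z θ - η j‖ ^ r :=
    fun θ j r => Real.rpow_nonneg (norm_nonneg _) _
  have hWnn : ∀ θ, 0 ≤ W θ := fun θ => Finset.prod_nonneg fun j _ => hanng θ j _
  -- the integrand
  set P : ℝ → ℝ := fun θ => Rabs η (fun j => q j - 1 + ε) (z θ) *
      logPlus (‖f (z θ)‖) with hP
  have hfabsc : Continuous fun θ => ‖f (z θ)‖ :=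
    continuous_norm.comp (hf.continuousOn.comp_continuous hzc hzmem)
  have hLc : Continuous fun θ => logPlus (‖f (z θ)‖) := by
    have heq : (fun θ => logPlus (‖f (z θ)‖))
        = fun θ => Real.log (max (‖f (z θ)‖) 1) := by
      funext θ
      have h0 : (0:ℝ) ≤ ‖f (z θ)‖ := norm_nonneg _
      rcases le_or_gt 1 (‖f (z θ)‖) with h1 | h1
      · rw [max_eq_left h1]
        exact max_eq_left (Real.log_nonneg h1)
      · rw [max_eq_right h1.le, Real.log_one]
        exact max_eq_right (Real.log_nonpos h0 h1.le)
    rw [heq]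
    apply ContinuousOn.comp_continuous Real.continuousOn_log (hfabsc.max continuous_const)
    intro x
    simp only [Set.mem_compl_iff, Set.mem_singleton_iff]
    have : (1:ℝ) ≤ max (‖f (z x)‖) 1 := le_max_right _ _
    intro h
    rw [h] at this
    linarith
  have hRc : Continuous fun θ => Rabs η (fun j => q j - 1 + ε) (z θ) := by
    unfold Rabs
    exact continuous_finset_prod _ fun j _ => harpc j _
  have hPc : Continuous P := by rw [hP]; exact hRc.mul hLc
  -- pointwise bound P ≤ D * W
  have hPW : ∀ θ : ℝ, P θ ≤ D * W θ := by
    intro θ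
    have hRq_pos : 0 < Rabs η q (z θ) :=
      Finset.prod_pos fun j _ => Real.rpow_pos_of_pos (ha_pos θ j) _
    have hRq'_nn : 0 ≤ Rabs η (fun j => q j - 1 + ε) (z θ) :=
      Finset.prod_nonneg fun j _ => hanng θ j _
    have hlog : logPlus (‖f (z θ)‖) ≤ D / Rabs η q (z θ) := by
      have hDR : 0 ≤ D / Rabs η q (z θ) := le_of_lt (div_pos hD hRq_pos)
      have : logPlus (‖f (z θ)‖)
          = max (Real.log (‖f (z θ)‖)) 0 := rfl
      rw [this]
      apply max_le _ hDR
      rcases eq_or_lt_of_le (norm_nonneg (f (z θ))) with h0 | h0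
      · rw [← h0, Real.log_zero]; exact hDR
      · rw [Real.log_le_iff_le_exp h0]
        exact hb _ (hzmem θ)
    have hsplit : Rabs η (fun j => q j - 1 + ε) (z θ) = Rabs η q (z θ) * W θ := by
      unfold Rabs
      rw [hW, ← Finset.prod_mul_distrib]
      apply Finset.prod_congr rfl
      intro j _
      rw [← Real.rpow_add (ha_pos θ j)]
      ring_nf
    calc P θ ≤ Rabs η (fun j => q j - 1 + ε) (z θ) * (D / Rabs η q (z θ)) :=
          mul_le_mul_of_nonneg_left hlog hRq'_nn
      _ = D * W θ := by rw [hsplit]; field_simp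
  -- the integral of W is at most C
  have hWint : (∫ θ in (0:ℝ)..(2 * Real.pi), W θ) ≤ C := by
    rcases le_or_gt 1 ε with hge | hlt
    · -- ε ≥ 1 : W ≤ K ^ n
      have hWK : ∀ θ ∈ Icc (0:ℝ) (2 * Real.pi), W θ ≤ K ^ n := by
        intro θ _
        calc W θ ≤ ∏ _j : Fin n, K := by
              apply Finset.prod_le_prod (fun j _ => hanng θ j _)
              intro j _
              calc ‖z θ - η j‖ ^ (ε - 1) ≤ (2:ℝ) ^ (ε - 1) :=
                    Real.rpow_le_rpow (norm_nonneg _) (ha_ub θ j) (by linarith)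
                _ ≤ K := (le_max_left _ _).trans (le_max_right _ _)
          _ = K ^ n := by rw [Finset.prod_const, Finset.card_univ, Fintype.card_fin]
      calc (∫ θ in (0:ℝ)..(2 * Real.pi), W θ) ≤ ∫ _θ in (0:ℝ)..(2 * Real.pi), K ^ n := by
            apply integral_mono_on (by positivity) (hWc.intervalIntegrable _ _)
              (intervalIntegrable_const) hWK
        _ = 2 * Real.pi * K ^ n := by rw [intervalIntegral.integral_const]; simp [smul_eq_mul]; try ring
        _ ≤ C := by rw [hCdef]; linarith
    · rcases Nat.eq_zero_or_pos n with hn0 | hn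
      · -- n = 0 : W = 1
        have hW1 : ∀ θ ∈ Icc (0:ℝ) (2 * Real.pi), W θ ≤ K ^ n := by
          intro θ _
          rw [hW]
          subst hn0
          simp only [Finset.univ_eq_empty, Finset.prod_empty, pow_zero]
          exact le_refl 1
        calc (∫ θ in (0:ℝ)..(2 * Real.pi), W θ) ≤ ∫ _θ in (0:ℝ)..(2 * Real.pi), K ^ n := by
              apply integral_mono_on (by positivity) (hWc.intervalIntegrable _ _)
                (intervalIntegrable_const) hW1
          _ = 2 * Real.pi * K ^ n := by rw [intervalIntegral.integral_const]; simp [smul_eq_mul]; try ring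
          _ ≤ C := by rw [hCdef]; linarith
      · -- 0 < n, ε < 1
        have hKβ : β ^ (ε - 1) ≤ K := (le_max_right _ _).trans (le_max_right _ _)
        have hprod : ∀ θ : ℝ,
            W θ ≤ K ^ (n - 1) * ∑ j, ‖z θ - η j‖ ^ (ε - 1) := by
          intro θ
          obtain ⟨j₀, -, hj₀⟩ := Finset.exists_min_image Finset.univ
            (fun j => ‖z θ - η j‖) ⟨⟨0, hn⟩, Finset.mem_univ _⟩
          have herase : ∀ j ∈ Finset.univ.erase j₀,
              ‖z θ - η j‖ ^ (ε - 1) ≤ K := by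
            intro j hj
            have hjne : j ≠ j₀ := Finset.ne_of_mem_erase hj
            have haj : β ≤ ‖z θ - η j‖ := by
              by_contra hltc
              push_neg at hltc
              have h1 : ‖z θ - η j₀‖ < β :=
                lt_of_le_of_lt (hj₀ j (Finset.mem_univ j)) hltc
              have htri : ‖η j - η j₀‖
                  ≤ ‖z θ - η j‖ + ‖z θ - η j₀‖ := by
                calc ‖η j - η j₀‖
                    ≤ ‖η j - z θ‖ + ‖z θ - η j₀‖ :=
                      norm_sub_le_norm_sub_add_norm_sub _ _ _
                  _ = ‖z θ - η j‖ + ‖z θ - η j₀‖ := by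
                      rw [norm_sub_rev]
              have hsep' := hsep j j₀ hjne
              have hβ4 : β ≤ α / 4 := min_le_left _ _
              linarith
            calc ‖z θ - η j‖ ^ (ε - 1) ≤ β ^ (ε - 1) :=
                  Real.rpow_le_rpow_of_nonpos hβ haj (by linarith)
              _ ≤ K := hKβ
          calc W θ = ‖z θ - η j₀‖ ^ (ε - 1) *
                ∏ j ∈ Finset.univ.erase j₀, ‖z θ - η j‖ ^ (ε - 1) := by
                rw [hW]
                exact (Finset.mul_prod_erase _ _ (Finset.mem_univ _)).symm
            _ ≤ ‖z θ - η j₀‖ ^ (ε - 1) * K ^ (n - 1) := by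
                apply mul_le_mul_of_nonneg_left _ (hanng θ j₀ _)
                calc (∏ j ∈ Finset.univ.erase j₀, ‖z θ - η j‖ ^ (ε - 1))
                    ≤ ∏ _j ∈ Finset.univ.erase j₀, K :=
                      Finset.prod_le_prod (fun j _ => hanng θ j _) herase
                  _ = K ^ (n - 1) := by
                      rw [Finset.prod_const, Finset.card_erase_of_mem (Finset.mem_univ _),
                        Finset.card_univ, Fintype.card_fin]
            _ ≤ (∑ j, ‖z θ - η j‖ ^ (ε - 1)) * K ^ (n - 1) :=
                mul_le_mul_of_nonneg_right
                  (Finset.single_le_sum (fun j _ => hanng θ j _) (Finset.mem_univ j₀))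
                  (pow_nonneg hK0.le _)
            _ = K ^ (n - 1) * ∑ j, ‖z θ - η j‖ ^ (ε - 1) := mul_comm _ _
        have hsumc : Continuous fun θ => ∑ j, ‖z θ - η j‖ ^ (ε - 1) :=
          continuous_finset_sum _ fun j _ => harpc j _
        calc (∫ θ in (0:ℝ)..(2 * Real.pi), W θ)
            ≤ ∫ θ in (0:ℝ)..(2 * Real.pi),
                K ^ (n - 1) * ∑ j, ‖z θ - η j‖ ^ (ε - 1) := by
              apply integral_mono_on (by positivity) (hWc.intervalIntegrable _ _)
                ((continuous_const.mul hsumc).intervalIntegrable _ _)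
              intro θ _
              exact hprod θ
          _ = K ^ (n - 1) * ∫ θ in (0:ℝ)..(2 * Real.pi),
                ∑ j, ‖z θ - η j‖ ^ (ε - 1) := by
              rw [intervalIntegral.integral_const_mul]
          _ = K ^ (n - 1) * ∑ j, ∫ θ in (0:ℝ)..(2 * Real.pi),
                ‖z θ - η j‖ ^ (ε - 1) := by
              rw [intervalIntegral.integral_finset_sum]
              intro j _
              exact (harpc j _).intervalIntegrable _ _
          _ ≤ K ^ (n - 1) * (n * Bs) := by
              apply mul_le_mul_of_nonneg_left _ (pow_nonneg hK0.le _)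
              calc (∑ j : Fin n, ∫ θ in (0:ℝ)..(2 * Real.pi),
                    ‖z θ - η j‖ ^ (ε - 1))
                  ≤ ∑ _j : Fin n, Bs := by
                    apply Finset.sum_le_sum
                    intro j _
                    exact single_int hs0 hs1 hε hlt (η j) (hη j)
                _ = n * Bs := by rw [Finset.sum_const, Finset.card_univ, Fintype.card_fin,
                    nsmul_eq_mul]
          _ ≤ C := by rw [hCdef]; rw [mul_assoc] at *; nlinarith [mul_pos hπ (pow_pos hK0 n)]
  -- put it together
  calc (∫ θ in (0:ℝ)..(2 * Real.pi), P θ)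
      ≤ ∫ θ in (0:ℝ)..(2 * Real.pi), D * W θ := by
        apply integral_mono_on (by positivity) (hPc.intervalIntegrable _ _)
          ((continuous_const.mul hWc).intervalIntegrable _ _)
        intro θ _
        exact hPW θ
    _ = D * ∫ θ in (0:ℝ)..(2 * Real.pi), W θ := by rw [intervalIntegral.integral_const_mul]
    _ ≤ D * C := mul_le_mul_of_nonneg_left hWint hD.le


end
end

section
/- Let p > 0 and let η_1,…,η_n ∈ 𝕋 be distinct points whose minimal pairwise arc separation is at least α > 0. Then the function z ↦ (1 − |z|²)^{p−1} ∏_{k=1}^n |z − η_k|^{−1} is integrable on 𝔻 with respect to planar Lebesgue measure, and ∫_𝔻 (1 − |z|²)^{p−1} ∏_{k=1}^n |z − η_k|^{−1} dm(z) ≤ c(p, α) < ∞, where c(p, α) depends only on p, n and α. -/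
open MeasureTheory Metric Complex Set ENNReal
open scoped Classical

noncomputable section

lemma aux17_factA {c : ℝ} (hc : -1 < c) {b : ℝ} (hb : 0 < b) :
    ∫⁻ y in Ioo (0:ℝ) b, ENNReal.ofReal (y ^ c) = ENNReal.ofReal (b ^ (c+1) / (c+1)) := by
  rw [← ofReal_integral_eq_lintegral_ofReal]
  · congr 1
    have h1 : ∫ y in Ioo (0:ℝ) b, y ^ c = ∫ y in (0:ℝ)..b, y ^ c := by
      rw [intervalIntegral.integral_of_le hb.le, ← MeasureTheory.integral_Ioc_eq_integral_Ioo]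
    rw [h1, integral_rpow (Or.inl hc), Real.zero_rpow (by linarith), sub_zero]
  · have h2 := intervalIntegral.intervalIntegrable_rpow' (a := 0) (b := b) hc
    rw [intervalIntegrable_iff_integrableOn_Ioo_of_le hb.le] at h2
    exact h2
  · exact Filter.eventually_of_mem (self_mem_ae_restrict measurableSet_Ioo)
      (fun y hy => Real.rpow_nonneg hy.1.le c)

lemma aux17_factB {c : ℝ} (hc : -1 < c) {b : ℝ} (hb : 0 < b) :
    ∫⁻ y in Ioo (0:ℝ) b, ENNReal.ofReal ((b - y) ^ c) = ENNReal.ofReal (b ^ (c+1) / (c+1)) := by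
  rw [← ofReal_integral_eq_lintegral_ofReal]
  · congr 1
    have h1 : ∫ y in Ioo (0:ℝ) b, (b - y) ^ c = ∫ y in (0:ℝ)..b, (b - y) ^ c := by
      rw [intervalIntegral.integral_of_le hb.le, ← MeasureTheory.integral_Ioc_eq_integral_Ioo]
    rw [h1, intervalIntegral.integral_comp_sub_left (fun y => y ^ c) b, sub_self, sub_zero,
      integral_rpow (Or.inl hc), Real.zero_rpow (by linarith), sub_zero]
  · have h2 := (intervalIntegral.intervalIntegrable_rpow' (a := 0) (b := b) hc).comp_sub_left b
    rw [sub_self, sub_zero] at h2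
    replace h2 := h2.symm
    rw [intervalIntegrable_iff_integrableOn_Ioo_of_le hb.le] at h2
    exact h2
  · exact Filter.eventually_of_mem (self_mem_ae_restrict measurableSet_Ioo)
      (fun y hy => Real.rpow_nonneg (by linarith [hy.2]) c)

lemma aux17_lint_neg_Ioo (f : ℝ → ℝ≥0∞) {b : ℝ} :
    ∫⁻ x in Ioo (-b) 0, f (-x) = ∫⁻ x in Ioo 0 b, f x := by
  have h := (Measure.measurePreserving_neg (volume : Measure ℝ)).setLIntegral_comp_preimage_emb
      (MeasurableEquiv.neg ℝ).measurableEmbedding f (Ioo 0 b)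
  have hset : (Neg.neg : ℝ → ℝ) ⁻¹' (Ioo 0 b) = Ioo (-b) 0 := by
    ext x
    simp only [Set.mem_preimage, Set.mem_Ioo]
    constructor <;> intro hx <;> constructor <;> linarith [hx.1, hx.2]
  rwa [hset] at h

lemma aux17_lint_abs (g : ℝ → ℝ) {b : ℝ} :
    ∫⁻ y in Ioo (-b) b, ENNReal.ofReal (g |y|) ≤ 2 * ∫⁻ y in Ioo 0 b, ENNReal.ofReal (g y) := by
  have hsub : Ioo (-b) b ⊆ Ioo (-b) 0 ∪ Ico 0 b := by
    intro y hy
    rcases lt_or_ge y 0 with h | h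
    · exact Or.inl ⟨hy.1, h⟩
    · exact Or.inr ⟨h, hy.2⟩
  calc ∫⁻ y in Ioo (-b) b, ENNReal.ofReal (g |y|)
      ≤ ∫⁻ y in Ioo (-b) 0 ∪ Ico 0 b, ENNReal.ofReal (g |y|) :=
        lintegral_mono_set hsub
    _ ≤ (∫⁻ y in Ioo (-b) 0, ENNReal.ofReal (g |y|))
        + ∫⁻ y in Ico 0 b, ENNReal.ofReal (g |y|) := lintegral_union_le _ _ _
    _ = (∫⁻ y in Ioo 0 b, ENNReal.ofReal (g y)) + ∫⁻ y in Ioo 0 b, ENNReal.ofReal (g y) := by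
        congr 1
        · rw [setLIntegral_congr_fun_ae measurableSet_Ioo
            (ae_of_all _ (fun y (hy : y ∈ Ioo (-b) 0) => by
              rw [abs_of_neg hy.2]))]
          exact aux17_lint_neg_Ioo (fun y => ENNReal.ofReal (g y))
        · rw [setLIntegral_congr Ioo_ae_eq_Ico.symm]
          exact setLIntegral_congr_fun_ae measurableSet_Ioo
            (ae_of_all _ (fun y (hy : y ∈ Ioo 0 b) => by rw [abs_of_pos hy.1]))
    _ = 2 * ∫⁻ y in Ioo 0 b, ENNReal.ofReal (g y) := by rw [two_mul]

lemma aux17_inner_bound {a b : ℝ} (ha : 1/2 ≤ a) (ha' : a < 1) (hb : 0 < b) :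
    ∫⁻ y in Ioo (-b) b, ENNReal.ofReal ((b^2 - y^2) ^ (-a) * |y| ^ (-a))
      ≤ ENNReal.ofReal (16/(1-a) * b ^ (1-3*a)) := by
  have ha0 : 0 < a := by linarith
  have hma : -a ≤ 0 := by linarith
  have hc : (-1:ℝ) < -a := by linarith
  set D : ℝ := b ^ (-a) * (b/2) ^ (-a) with hD
  have hD0 : 0 ≤ D := mul_nonneg (Real.rpow_nonneg hb.le _) (Real.rpow_nonneg (by linarith) _)
  have step1 : ∫⁻ y in Ioo (-b) b, ENNReal.ofReal ((b^2 - y^2) ^ (-a) * |y| ^ (-a))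
      ≤ ∫⁻ y in Ioo (-b) b,
        (ENNReal.ofReal D * (ENNReal.ofReal (|y| ^ (-a)) + ENNReal.ofReal ((b - |y|) ^ (-a)))) := by
    apply setLIntegral_mono (by fun_prop)
    intro y hy
    have hyb : |y| < b := abs_lt.2 ⟨hy.1, hy.2⟩
    have hyb' : 0 < b - |y| := by linarith
    rw [← ENNReal.ofReal_add (Real.rpow_nonneg (abs_nonneg y) _) (Real.rpow_nonneg hyb'.le _),
      ← ENNReal.ofReal_mul hD0]
    apply ENNReal.ofReal_le_ofReal
    -- real inequality
    have hfac : (b^2 - y^2 : ℝ) = (b - |y|) * (b + |y|) := by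
      rw [← _root_.sq_abs y]; ring
    have h1 : (b^2 - y^2 : ℝ) ^ (-a) = (b - |y|) ^ (-a) * (b + |y|) ^ (-a) := by
      rw [hfac, Real.mul_rpow hyb'.le (by positivity)]
    have h2 : (b + |y|) ^ (-a) ≤ b ^ (-a) :=
      Real.rpow_le_rpow_of_nonpos hb (by linarith [abs_nonneg y]) hma
    have h3 : (b - |y|) ^ (-a) * |y| ^ (-a)
        ≤ (b/2) ^ (-a) * (|y| ^ (-a) + (b - |y|) ^ (-a)) := by
      rcases le_or_gt (|y|) (b/2) with hcase | hcase
      · have : (b - |y|) ^ (-a) ≤ (b/2) ^ (-a) :=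
          Real.rpow_le_rpow_of_nonpos (by linarith) (by linarith) hma
        calc (b - |y|) ^ (-a) * |y| ^ (-a) ≤ (b/2) ^ (-a) * |y| ^ (-a) :=
              mul_le_mul_of_nonneg_right this (Real.rpow_nonneg (abs_nonneg y) _)
          _ ≤ (b/2) ^ (-a) * (|y| ^ (-a) + (b - |y|) ^ (-a)) := by
              apply mul_le_mul_of_nonneg_left _ (Real.rpow_nonneg (by linarith) _)
              linarith [Real.rpow_nonneg hyb'.le (-a)]
      · have : |y| ^ (-a) ≤ (b/2) ^ (-a) :=
          Real.rpow_le_rpow_of_nonpos (by linarith) hcase.le hma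
        calc (b - |y|) ^ (-a) * |y| ^ (-a) ≤ (b - |y|) ^ (-a) * (b/2) ^ (-a) :=
              mul_le_mul_of_nonneg_left this (Real.rpow_nonneg hyb'.le _)
          _ ≤ (b/2) ^ (-a) * (|y| ^ (-a) + (b - |y|) ^ (-a)) := by
              rw [mul_comm]
              apply mul_le_mul_of_nonneg_left _ (Real.rpow_nonneg (by linarith) _)
              linarith [Real.rpow_nonneg (abs_nonneg y) (-a)]
    calc (b^2 - y^2 : ℝ) ^ (-a) * |y| ^ (-a)
        = (b + |y|) ^ (-a) * ((b - |y|) ^ (-a) * |y| ^ (-a)) := by rw [h1]; ring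
      _ ≤ b ^ (-a) * ((b/2) ^ (-a) * (|y| ^ (-a) + (b - |y|) ^ (-a))) := by
          apply mul_le_mul h2 h3 _ (Real.rpow_nonneg hb.le _)
          exact mul_nonneg (Real.rpow_nonneg hyb'.le _) (Real.rpow_nonneg (abs_nonneg y) _)
      _ = D * (|y| ^ (-a) + (b - |y|) ^ (-a)) := by rw [hD]; ring
  have step2 : ∫⁻ y in Ioo (-b) b,
        (ENNReal.ofReal D * (ENNReal.ofReal (|y| ^ (-a)) + ENNReal.ofReal ((b - |y|) ^ (-a))))
      = ENNReal.ofReal D * ((∫⁻ y in Ioo (-b) b, ENNReal.ofReal (|y| ^ (-a)))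
          + ∫⁻ y in Ioo (-b) b, ENNReal.ofReal ((b - |y|) ^ (-a))) := by
    rw [lintegral_const_mul' _ _ ENNReal.ofReal_ne_top, lintegral_add_left (by fun_prop)]
  have habs1 : ∫⁻ y in Ioo (-b) b, ENNReal.ofReal (|y| ^ (-a))
      ≤ ENNReal.ofReal (2 * (b ^ (1-a) / (1-a))) := by
    have := aux17_lint_abs (fun y => y ^ (-a)) (b := b)
    rw [aux17_factA hc hb] at this
    refine this.trans ?_
    rw [← ENNReal.ofReal_ofNat, ← ENNReal.ofReal_mul (by norm_num)]
    apply ENNReal.ofReal_le_ofReal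
    have : -a + 1 = 1 - a := by ring
    rw [this]
  have habs2 : ∫⁻ y in Ioo (-b) b, ENNReal.ofReal ((b - |y|) ^ (-a))
      ≤ ENNReal.ofReal (2 * (b ^ (1-a) / (1-a))) := by
    have := aux17_lint_abs (fun y => (b - y) ^ (-a)) (b := b)
    rw [aux17_factB hc hb] at this
    refine this.trans ?_
    rw [← ENNReal.ofReal_ofNat, ← ENNReal.ofReal_mul (by norm_num)]
    apply ENNReal.ofReal_le_ofReal
    have : -a + 1 = 1 - a := by ring
    rw [this]
  calc ∫⁻ y in Ioo (-b) b, ENNReal.ofReal ((b^2 - y^2) ^ (-a) * |y| ^ (-a))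
      ≤ ENNReal.ofReal D * ((∫⁻ y in Ioo (-b) b, ENNReal.ofReal (|y| ^ (-a)))
          + ∫⁻ y in Ioo (-b) b, ENNReal.ofReal ((b - |y|) ^ (-a))) := step1.trans (le_of_eq step2)
    _ ≤ ENNReal.ofReal D * (ENNReal.ofReal (2 * (b ^ (1-a) / (1-a)))
          + ENNReal.ofReal (2 * (b ^ (1-a) / (1-a)))) := by gcongr
    _ = ENNReal.ofReal (D * (2 * (b ^ (1-a) / (1-a)) + 2 * (b ^ (1-a) / (1-a)))) := by
        have hTnn : (0:ℝ) ≤ 2 * (b ^ (1-a) / (1-a)) :=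
          mul_nonneg (by norm_num) (div_nonneg (Real.rpow_nonneg hb.le _) (by linarith))
        rw [← ENNReal.ofReal_add hTnn hTnn, ← ENNReal.ofReal_mul hD0]
    _ ≤ ENNReal.ofReal (16/(1-a) * b ^ (1-3*a)) := by
        apply ENNReal.ofReal_le_ofReal
        have h1a : (0:ℝ) < 1 - a := by linarith
        have hhalf : (b/2 : ℝ) ^ (-a) = b ^ (-a) * 2 ^ a := by
          have : (b/2 : ℝ) = b * 2⁻¹ := by ring
          rw [this, Real.mul_rpow hb.le (by norm_num), ← Real.rpow_neg_one 2,
            ← Real.rpow_mul (by norm_num : (0:ℝ) ≤ 2)]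
          norm_num
        have h2a : (2:ℝ) ^ a ≤ 2 := by
          nth_rewrite 2 [← Real.rpow_one 2]
          exact Real.rpow_le_rpow_of_exponent_le one_le_two ha'.le
        have hbpow : b ^ (-a) * b ^ (-a) * b ^ (1-a) = b ^ (1-3*a) := by
          rw [← Real.rpow_add hb, ← Real.rpow_add hb]
          ring_nf
        have hb1 : (0:ℝ) ≤ b ^ (1-a) := Real.rpow_nonneg hb.le _
        have hb2 : (0:ℝ) ≤ b ^ (-a) := Real.rpow_nonneg hb.le _
        calc D * (2 * (b ^ (1-a) / (1-a)) + 2 * (b ^ (1-a) / (1-a)))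
            = (2:ℝ) ^ a * (4 / (1-a)) * (b ^ (-a) * b ^ (-a) * b ^ (1-a)) := by
              rw [hD, hhalf]; field_simp; ring
          _ ≤ 2 * (4 / (1-a)) * (b ^ (-a) * b ^ (-a) * b ^ (1-a)) := by
              apply mul_le_mul_of_nonneg_right _ (by positivity)
              apply mul_le_mul_of_nonneg_right h2a (by positivity)
          _ = 8/(1-a) * b ^ (1-3*a) := by rw [hbpow]; ring
          _ ≤ 16/(1-a) * b ^ (1-3*a) := by
              apply mul_le_mul_of_nonneg_right _ (Real.rpow_nonneg hb.le _)
              rw [div_le_div_iff₀ h1a h1a]; nlinarith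
lemma aux17_disc_bound {a : ℝ} (ha : 1/2 ≤ a) (ha' : a < 1) :
    ∫⁻ z in ball (0:ℂ) 1, ENNReal.ofReal ((1 - ‖z‖ ^ 2) ^ (-a) * |z.im| ^ (-a))
      ≤ ENNReal.ofReal (64 / (1-a)^2) := by
  have h1a : (0:ℝ) < 1 - a := by linarith
  set S : Set (ℝ × ℝ) := {q : ℝ × ℝ | q.1^2 + q.2^2 < 1} with hS
  have hSm : MeasurableSet S := by
    apply measurableSet_lt _ measurable_const
    fun_prop
  set G : ℝ × ℝ → ℝ≥0∞ := S.indicator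
      (fun q => ENNReal.ofReal ((1 - (q.1^2 + q.2^2)) ^ (-a) * |q.2| ^ (-a))) with hG
  have hGm : Measurable G := by
    apply Measurable.indicator _ hSm
    fun_prop
  have key : ∫⁻ z in ball (0:ℂ) 1, ENNReal.ofReal ((1 - ‖z‖ ^ 2) ^ (-a) * |z.im| ^ (-a))
      = ∫⁻ q, G q := by
    rw [← lintegral_indicator measurableSet_ball,
      ← Complex.volume_preserving_equiv_real_prod.lintegral_comp hGm]
    apply lintegral_congr
    intro z
    have hz : Complex.measurableEquivRealProd z = (z.re, z.im) := rfl
    have hmem : z ∈ ball (0:ℂ) 1 ↔ (z.re, z.im) ∈ S := by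
      rw [mem_ball_zero_iff, hS]
      simp only [Set.mem_setOf_eq]
      constructor
      · intro h
        have h2 : ‖z‖ ^ 2 < 1 := by nlinarith [norm_nonneg z]
        rw [Complex.sq_norm, Complex.normSq_apply] at h2
        nlinarith
      · intro h
        have h2 : ‖z‖ ^ 2 < 1 := by
          rw [Complex.sq_norm, Complex.normSq_apply]; nlinarith
        nlinarith [norm_nonneg z]
    have hval : (1 : ℝ) - ‖z‖ ^ 2 = 1 - (z.re^2 + z.im^2) := by
      rw [Complex.sq_norm, Complex.normSq_apply]; ring
    by_cases hzb : z ∈ ball (0:ℂ) 1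
    · rw [Set.indicator_of_mem hzb, hG, hz, Set.indicator_of_mem (hmem.1 hzb)]
      simp only [hval]
    · rw [Set.indicator_of_notMem hzb, hG, hz,
        Set.indicator_of_notMem (fun h => hzb (hmem.2 h))]
  rw [key, Measure.volume_eq_prod, lintegral_prod _ hGm.aemeasurable]
  set d : ℝ := (1 - 3*a)/2 with hd
  have hd0 : d ≤ 0 := by rw [hd]; linarith
  have hd1 : (-1:ℝ) < d := by rw [hd]; linarith
  set H : ℝ → ℝ≥0∞ := (Ioo (-1:ℝ) 1).indicator
      (fun x => ENNReal.ofReal (16/(1-a) * (1 - |x|) ^ d)) with hH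
  have hinner : ∀ x : ℝ, ∫⁻ y, G (x, y) ≤ H x := by
    intro x
    have hsec : ∀ y : ℝ, G (x, y) = ({y : ℝ | x^2 + y^2 < 1}).indicator
        (fun y => ENNReal.ofReal ((1 - (x^2 + y^2)) ^ (-a) * |y| ^ (-a))) y := by
      intro y
      by_cases hmem : x^2 + y^2 < 1
      · rw [hG, Set.indicator_of_mem (by exact hmem), Set.indicator_of_mem (by exact hmem)]
      · rw [hG, Set.indicator_of_notMem (by exact hmem), Set.indicator_of_notMem (by exact hmem)]
    simp only [hsec]
    rw [lintegral_indicator (by apply measurableSet_lt (by fun_prop) measurable_const)]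
    by_cases hx : |x| < 1
    · have hx2 : x^2 < 1 := by nlinarith [abs_nonneg x, _root_.sq_abs x]
      set b : ℝ := Real.sqrt (1 - x^2) with hbdef
      have hb : 0 < b := Real.sqrt_pos.2 (by linarith)
      have hb2 : b^2 = 1 - x^2 := Real.sq_sqrt (by linarith)
      have hset : {y : ℝ | x^2 + y^2 < 1} = Ioo (-b) b := by
        ext y
        simp only [Set.mem_setOf_eq, Set.mem_Ioo]
        constructor
        · intro h
          constructor <;> nlinarith
        · intro hy
          nlinarith [hy.1, hy.2]
      rw [hset, setLIntegral_congr_fun_ae measurableSet_Ioo (ae_of_all _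
        (fun y (_ : y ∈ Ioo (-b) b) => by
          rw [show (1:ℝ) - (x^2 + y^2) = b^2 - y^2 by rw [hb2]; ring]))]
      refine (aux17_inner_bound ha ha' hb).trans ?_
      have hxm : x ∈ Ioo (-1:ℝ) 1 := by
        rw [show Ioo (-1:ℝ) 1 = {t : ℝ | -1 < t ∧ t < 1} from rfl]
        exact abs_lt.1 hx
      rw [hH, Set.indicator_of_mem hxm]
      apply ENNReal.ofReal_le_ofReal
      apply mul_le_mul_of_nonneg_left _ (by positivity)
      have hb13 : b ^ (1 - 3*a) = (1 - x^2) ^ d := by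
        rw [hbdef, Real.sqrt_eq_rpow, ← Real.rpow_mul (by linarith), hd]
        ring_nf
      rw [hb13]
      have hxx : 1 - |x| ≤ 1 - x^2 := by nlinarith [abs_nonneg x, _root_.sq_abs x]
      have hx1 : (0:ℝ) < 1 - |x| := by linarith
      exact Real.rpow_le_rpow_of_nonpos hx1 hxx hd0
    · have hset : {y : ℝ | x^2 + y^2 < 1} = (∅ : Set ℝ) := by
        ext y
        simp only [Set.mem_setOf_eq, Set.mem_empty_iff_false, iff_false, not_lt]
        nlinarith [abs_nonneg x, _root_.sq_abs x, sq_nonneg y, not_lt.1 hx]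
      rw [hset]
      simp
  calc ∫⁻ x, ∫⁻ y, G (x, y) ≤ ∫⁻ x, H x := lintegral_mono hinner
    _ = ∫⁻ x in Ioo (-1:ℝ) 1, ENNReal.ofReal (16/(1-a) * (1 - |x|) ^ d) := by
        rw [hH, lintegral_indicator measurableSet_Ioo]
    _ = ∫⁻ x in Ioo (-1:ℝ) 1, ENNReal.ofReal (16/(1-a)) * ENNReal.ofReal ((1 - |x|) ^ d) := by
        apply lintegral_congr
        intro x
        rw [← ENNReal.ofReal_mul (by positivity)]
    _ = ENNReal.ofReal (16/(1-a)) * ∫⁻ x in Ioo (-1:ℝ) 1, ENNReal.ofReal ((1 - |x|) ^ d) := by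
        rw [lintegral_const_mul' _ _ ENNReal.ofReal_ne_top]
    _ ≤ ENNReal.ofReal (16/(1-a)) * ENNReal.ofReal (2 * ((1:ℝ) ^ (d+1) / (d+1))) := by
        gcongr
        have h3 := aux17_lint_abs (fun y => ((1:ℝ) - y) ^ d) (b := 1)
        rw [aux17_factB hd1 one_pos] at h3
        refine h3.trans ?_
        rw [← ENNReal.ofReal_ofNat, ← ENNReal.ofReal_mul (by norm_num)]
    _ ≤ ENNReal.ofReal (64 / (1-a)^2) := by
        rw [← ENNReal.ofReal_mul (by positivity)]
        apply ENNReal.ofReal_le_ofReal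
        rw [Real.one_rpow]
        have hd2 : d + 1 = (3 - 3*a)/2 := by rw [hd]; ring
        rw [hd2]
        have hne : (1-a) ≠ 0 := ne_of_gt h1a
        have hne3 : (3-3*a : ℝ) ≠ 0 := by intro h; apply hne; linarith
        have e : (16/(1-a) * (2 * (1 / ((3 - 3*a)/2))) : ℝ) = 64/(3*(1-a)^2) := by
          field_simp
          ring
        rw [e, div_le_div_iff₀ (by positivity) (by positivity)]
        nlinarith
lemma aux17_rot (a : ℝ) (η : ℂ) (hη : ‖η‖ = 1) :
    ∫⁻ z in ball (0:ℂ) 1,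
        ENNReal.ofReal ((1 - ‖z‖ ^ 2) ^ (-a) * |((starRingEnd ℂ) η * z).im| ^ (-a))
      = ∫⁻ z in ball (0:ℂ) 1,
        ENNReal.ofReal ((1 - ‖z‖ ^ 2) ^ (-a) * |z.im| ^ (-a)) := by
  set u : Circle := ⟨η, mem_sphere_zero_iff_norm.2 (by rw [hη])⟩ with hu
  have hmp : MeasurePreserving (rotation u) volume volume := (rotation u).measurePreserving
  have hemb : MeasurableEmbedding (rotation u) :=
    (rotation u).toHomeomorph.measurableEmbedding
  have h := hmp.setLIntegral_comp_preimage_emb hemb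
      (fun w => ENNReal.ofReal ((1 - ‖w‖ ^ 2) ^ (-a) * |((starRingEnd ℂ) η * w).im| ^ (-a)))
      (ball (0:ℂ) 1)
  have hpre : (rotation u) ⁻¹' (ball (0:ℂ) 1) = ball (0:ℂ) 1 := by
    ext w
    simp only [Set.mem_preimage, mem_ball_zero_iff, rotation_apply]
    rw [norm_mul]
    have : ‖(u : ℂ)‖ = 1 := by rw [hu, hη]
    rw [this, one_mul]
  rw [hpre] at h
  rw [← h]
  apply lintegral_congr
  intro w
  congr 2
  · rw [rotation_apply, norm_mul]
    have : ‖(u : ℂ)‖ = 1 := by rw [hu]; exact hη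
    rw [this, one_mul]
  · rw [rotation_apply]
    have hcu : (starRingEnd ℂ) η * ((u : ℂ) * w) = w := by
      rw [hu, ← mul_assoc]
      have : (starRingEnd ℂ) η * η = 1 := by
        rw [mul_comm, Complex.mul_conj]
        norm_cast
        rw [Complex.normSq_eq_norm_sq, hη]; norm_num
      rw [this, one_mul]
    rw [hcu]

lemma aux17_null (η : ℂ) (hη : ‖η‖ = 1) :
    volume {z : ℂ | ((starRingEnd ℂ) η * z).im = 0} = 0 := by
  have haxis : volume {w : ℂ | w.im = 0} = 0 := by
    have hpre : {w : ℂ | w.im = 0}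
        = Complex.measurableEquivRealProd ⁻¹' ((univ : Set ℝ) ×ˢ ({0} : Set ℝ)) := by
      ext w
      simp only [Set.mem_setOf_eq, Set.mem_preimage]
      constructor
      · intro h
        exact ⟨trivial, h⟩
      · intro h
        exact h.2
    rw [hpre, Complex.volume_preserving_equiv_real_prod.measure_preimage
      ((MeasurableSet.univ.prod (measurableSet_singleton 0)).nullMeasurableSet)]
    rw [Measure.volume_eq_prod, Measure.prod_prod, Real.volume_singleton, mul_zero]
  have hηc : ‖(starRingEnd ℂ) η‖ = 1 := by
    rw [Complex.norm_conj, hη]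
  set u : Circle := ⟨(starRingEnd ℂ) η,
      mem_sphere_zero_iff_norm.2 (by rw [hηc])⟩ with hu
  have hpre2 : {z : ℂ | ((starRingEnd ℂ) η * z).im = 0} = (rotation u) ⁻¹' {w : ℂ | w.im = 0} := by
    ext z
    simp only [Set.mem_setOf_eq, Set.mem_preimage, rotation_apply]
    exact Iff.rfl
  have hms : MeasurableSet {w : ℂ | w.im = 0} :=
    Complex.measurable_im (measurableSet_singleton 0)
  rw [hpre2, (rotation u).measurePreserving.measure_preimage hms.nullMeasurableSet]
  exact haxis
lemma aux17_key0 {a : ℝ} (ha : 1/2 ≤ a) (ha' : a < 1) :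
    ∫⁻ z in ball (0:ℂ) 1, ENNReal.ofReal ((1 - ‖z‖ ^ 2) ^ (-a))
      ≤ ENNReal.ofReal (64/(1-a)^2) := by
  have hax : volume {z : ℂ | z.im = 0} = 0 := by
    have h := aux17_null 1 (by simp)
    have he : {z : ℂ | ((starRingEnd ℂ) 1 * z).im = 0} = {z : ℂ | z.im = 0} := by
      ext z; simp
    rwa [he] at h
  have hae : ∀ᵐ z ∂(volume.restrict (ball (0:ℂ) 1)),
      ENNReal.ofReal ((1 - ‖z‖ ^ 2) ^ (-a))
        ≤ ENNReal.ofReal ((1 - ‖z‖ ^ 2) ^ (-a) * |z.im| ^ (-a)) := by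
    filter_upwards [ae_restrict_mem measurableSet_ball,
      ae_restrict_of_ae (measure_eq_zero_iff_ae_notMem.1 hax)] with z hz hz0
    have hz0' : z.im ≠ 0 := hz0
    have hzlt : ‖z‖ < 1 := by rwa [mem_ball_zero_iff] at hz
    have him1 : |z.im| ≤ 1 := le_trans (Complex.abs_im_le_norm z) hzlt.le
    have him0 : 0 < |z.im| := abs_pos.2 hz0'
    have h1 : (1:ℝ) ≤ |z.im| ^ (-a) := by
      have h2 := Real.rpow_le_rpow_of_exponent_ge him0 him1 (show -a ≤ (0:ℝ) by linarith)
      rwa [Real.rpow_zero] at h2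
    apply ENNReal.ofReal_le_ofReal
    have ht : (0:ℝ) ≤ 1 - ‖z‖ ^ 2 := by nlinarith [norm_nonneg z]
    exact le_mul_of_one_le_right (Real.rpow_nonneg ht _) h1
  exact (lintegral_mono_ae hae).trans (aux17_disc_bound ha ha')

lemma aux17_key1 {a : ℝ} (ha : 1/2 ≤ a) (ha' : a < 1) (w : ℂ) (hw : ‖w‖ = 1) :
    ∫⁻ z in ball (0:ℂ) 1,
        ENNReal.ofReal ((1 - ‖z‖ ^ 2) ^ (-a) * (‖z - w‖) ^ (-a))
      ≤ ENNReal.ofReal (64/(1-a)^2) := by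
  have hae : ∀ᵐ z ∂(volume.restrict (ball (0:ℂ) 1)),
      ENNReal.ofReal ((1 - ‖z‖ ^ 2) ^ (-a) * (‖z - w‖) ^ (-a))
        ≤ ENNReal.ofReal
            ((1 - ‖z‖ ^ 2) ^ (-a) * |((starRingEnd ℂ) w * z).im| ^ (-a)) := by
    filter_upwards [ae_restrict_mem measurableSet_ball,
      ae_restrict_of_ae (measure_eq_zero_iff_ae_notMem.1 (aux17_null w hw))] with z hz hz0
    have hz0' : ((starRingEnd ℂ) w * z).im ≠ 0 := hz0
    have hm0 : 0 < |((starRingEnd ℂ) w * z).im| := abs_pos.2 hz0'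
    have hcw : (starRingEnd ℂ) w * w = 1 := by
      rw [mul_comm, Complex.mul_conj]
      norm_cast
      rw [Complex.normSq_eq_norm_sq, hw]; norm_num
    have h1 : (starRingEnd ℂ) w * z - 1 = (starRingEnd ℂ) w * (z - w) := by
      rw [mul_sub, hcw]
    have h2 : |((starRingEnd ℂ) w * z).im| ≤ ‖z - w‖ := by
      have e1 : ((starRingEnd ℂ) w * z - 1).im = ((starRingEnd ℂ) w * z).im := by simp
      calc |((starRingEnd ℂ) w * z).im| = |((starRingEnd ℂ) w * z - 1).im| := by rw [e1]
        _ ≤ ‖(starRingEnd ℂ) w * z - 1‖ := Complex.abs_im_le_norm _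
        _ = ‖z - w‖ := by rw [h1, norm_mul, Complex.norm_conj, hw, one_mul]
    apply ENNReal.ofReal_le_ofReal
    have hzlt : ‖z‖ < 1 := by rwa [mem_ball_zero_iff] at hz
    have ht : (0:ℝ) ≤ 1 - ‖z‖ ^ 2 := by nlinarith [norm_nonneg z]
    apply mul_le_mul_of_nonneg_left _ (Real.rpow_nonneg ht _)
    exact Real.rpow_le_rpow_of_nonpos hm0 h2 (by linarith)
  exact (lintegral_mono_ae hae).trans ((aux17_rot a w hw).le.trans (aux17_disc_bound ha ha'))
theorem stmt_17 (n : ℕ) (p : ℝ) (hp : 0 < p) (α : ℝ) (hα : 0 < α) :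
    ∃ c : ℝ, 0 < c ∧
      ∀ η : Fin n → ℂ, (∀ j, ‖η j‖ = 1) →
        (∀ j k, j ≠ k → α ≤ ‖η j - η k‖) →
      IntegrableOn
        (fun z : ℂ => (1 - ‖z‖ ^ 2) ^ (p - 1) * ∏ k, (‖z - η k‖)⁻¹)
        (ball (0 : ℂ) 1) volume ∧
      (∫ z in ball (0 : ℂ) 1,
          (1 - ‖z‖ ^ 2) ^ (p - 1) * ∏ k, (‖z - η k‖)⁻¹) ≤ c := by
  set a : ℝ := max (1 - p/2) (1/2) with hadef
  have ha : 1/2 ≤ a := le_max_right _ _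
  have hap : 1 - p/2 ≤ a := le_max_left _ _
  have ha' : a < 1 := by
    apply max_lt
    · linarith
    · norm_num
  have h1a : (0:ℝ) < 1 - a := by linarith
  set K : ℝ := (1 + 2/α)^n with hKdef
  have hbase : (1:ℝ) ≤ 1 + 2/α := by
    have h2α : (0:ℝ) ≤ 2/α := by positivity
    linarith
  have hK1 : (1:ℝ) ≤ K := one_le_pow₀ hbase
  have hK0 : (0:ℝ) < K := lt_of_lt_of_le one_pos hK1
  set C₀ : ℝ := 64/(1-a)^2 with hCdef
  have hC0 : 0 < C₀ := by positivity
  refine ⟨2*K*(n+1)*C₀ + 1, by positivity, ?_⟩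
  intro η hunit hsep
  set f : ℂ → ℝ :=
    fun z => (1 - ‖z‖ ^ 2) ^ (p - 1) * ∏ k, (‖z - η k‖)⁻¹ with hfdef
  have hAm : Measurable (fun z : ℂ => ‖z‖) := continuous_norm.measurable
  have hg1 : ∀ c : ℝ, Measurable (fun z : ℂ => (1 - ‖z‖ ^ 2) ^ c) := by
    intro c
    have h1 : Measurable (fun z : ℂ => 1 - ‖z‖ ^ 2) :=
      measurable_const.sub (hAm.pow_const 2)
    have h2 : Measurable (fun x : ℝ => x ^ c) := by fun_prop
    exact h2.comp h1
  have hg2 : ∀ (w : ℂ) (c : ℝ), Measurable (fun z : ℂ => (‖z - w‖) ^ c) := by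
    intro w c
    have h1 : Measurable (fun z : ℂ => ‖z - w‖) :=
      hAm.comp (measurable_id.sub measurable_const)
    have h2 : Measurable (fun x : ℝ => x ^ c) := by fun_prop
    exact h2.comp h1
  have hfm : Measurable f := by
    apply Measurable.mul
    · exact hg1 (p - 1)
    · apply Finset.measurable_prod
      intro k _
      exact (hAm.comp (measurable_id.sub measurable_const)).inv
  have hball : ∀ z ∈ ball (0:ℂ) 1,
      (0:ℝ) < 1 - ‖z‖ ^ 2 ∧ 1 - ‖z‖ ^ 2 ≤ 1 := by
    intro z hz
    have hzlt : ‖z‖ < 1 := by rwa [mem_ball_zero_iff] at hz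
    constructor
    · nlinarith [norm_nonneg z]
    · nlinarith [norm_nonneg z]
  have hrlow : ∀ z ∈ ball (0:ℂ) 1, ∀ j,
      (1 - ‖z‖ ^ 2)/2 ≤ ‖z - η j‖ := by
    intro z hz j
    have hzlt : ‖z‖ < 1 := by rwa [mem_ball_zero_iff] at hz
    have h3 : ‖η j‖ - ‖z‖ ≤ ‖η j - z‖ := norm_sub_norm_le _ _
    rw [hunit j] at h3
    have h4 : ‖η j - z‖ = ‖z - η j‖ :=
      norm_sub_rev _ _
    rw [h4] at h3
    nlinarith [norm_nonneg z]
  have hfnn : ∀ z ∈ ball (0:ℂ) 1, 0 ≤ f z := by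
    intro z hz
    apply mul_nonneg (Real.rpow_nonneg (hball z hz).1.le _)
    exact Finset.prod_nonneg (fun k _ => inv_nonneg.2 (norm_nonneg _))
  -- main lintegral estimate
  have hmain : ∫⁻ z in ball (0:ℂ) 1, ENNReal.ofReal (f z)
      ≤ ENNReal.ofReal (2*K*(n+1)*C₀) := by
    have hgm : Measurable (fun z : ℂ => ENNReal.ofReal (2*K) *
        ((∑ j : Fin n, ENNReal.ofReal
            ((1 - ‖z‖ ^ 2) ^ (-a) * (‖z - η j‖) ^ (-a)))
          + ENNReal.ofReal ((1 - ‖z‖ ^ 2) ^ (-a)))) := by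
      apply Measurable.const_mul
      apply Measurable.add
      · apply Finset.measurable_sum
        intro j _
        exact ((hg1 (-a)).mul (hg2 (η j) (-a))).ennreal_ofReal
      · exact (hg1 (-a)).ennreal_ofReal
    have hstep : ∀ z ∈ ball (0:ℂ) 1, ENNReal.ofReal (f z) ≤ ENNReal.ofReal (2*K) *
        ((∑ j : Fin n, ENNReal.ofReal
            ((1 - ‖z‖ ^ 2) ^ (-a) * (‖z - η j‖) ^ (-a)))
          + ENNReal.ofReal ((1 - ‖z‖ ^ 2) ^ (-a))) := by
      intro z hz
      obtain ⟨ht0, ht1⟩ := hball z hz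
      set t : ℝ := 1 - ‖z‖ ^ 2 with htdef
      set r : Fin n → ℝ := fun j => ‖z - η j‖ with hrdef
      have hrt : ∀ j, t/2 ≤ r j := fun j => hrlow z hz j
      have hr0 : ∀ j, 0 < r j := fun j => lt_of_lt_of_le (by linarith) (hrt j)
      have hprod : (∏ k, (r k)⁻¹) ≤ K * ((∑ j, (r j)⁻¹) + 1) := by
        have hsum0 : (0:ℝ) ≤ ∑ j, (r j)⁻¹ :=
          Finset.sum_nonneg (fun j _ => inv_nonneg.2 (hr0 j).le)
        by_cases hex : ∃ j, r j < α/2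
        · obtain ⟨j, hj⟩ := hex
          have hoth : ∀ k ∈ Finset.univ.erase j, (r k)⁻¹ ≤ 2/α := by
            intro k hk
            have hkj : k ≠ j := (Finset.mem_erase.1 hk).1
            have hsep' : α ≤ ‖η k - η j‖ := hsep k j hkj
            have htri : ‖η k - η j‖
                ≤ ‖η k - z‖ + ‖z - η j‖ :=
              norm_sub_le_norm_sub_add_norm_sub (η k) z (η j)
            have hzk : ‖η k - z‖ = r k := by
              rw [hrdef]
              dsimp only
              exact norm_sub_rev _ _
            have hge : α/2 ≤ r k := by
              rw [hzk] at htri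
              have : r j = ‖z - η j‖ := rfl
              rw [← this] at htri
              linarith
            rw [show (2/α : ℝ) = (α/2)⁻¹ by rw [inv_div]]
            exact inv_anti₀ (by linarith) hge
          calc (∏ k, (r k)⁻¹)
              = (r j)⁻¹ * ∏ k ∈ Finset.univ.erase j, (r k)⁻¹ :=
                (Finset.mul_prod_erase _ _ (Finset.mem_univ j)).symm
            _ ≤ ((∑ i, (r i)⁻¹) + 1) * K := by
                apply mul_le_mul
                · have h1 : (r j)⁻¹ ≤ ∑ k, (r k)⁻¹ :=
                    Finset.single_le_sum (fun k _ => inv_nonneg.2 (hr0 k).le)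
                      (Finset.mem_univ j)
                  linarith
                · calc ∏ k ∈ Finset.univ.erase j, (r k)⁻¹
                      ≤ ∏ _k ∈ Finset.univ.erase j, (2/α : ℝ) :=
                        Finset.prod_le_prod (fun k _ => inv_nonneg.2 (hr0 k).le) hoth
                    _ = (2/α : ℝ) ^ (n - 1) := by
                        rw [Finset.prod_const, Finset.card_erase_of_mem (Finset.mem_univ j),
                          Finset.card_univ, Fintype.card_fin]
                    _ ≤ (1 + 2/α : ℝ) ^ (n - 1) :=
                        pow_le_pow_left₀ (by positivity) (by linarith) _
                    _ ≤ K := by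
                        rw [hKdef]
                        exact pow_le_pow_right₀ hbase (Nat.sub_le n 1)
                · exact Finset.prod_nonneg (fun k _ => inv_nonneg.2 (hr0 k).le)
                · linarith
            _ = K * ((∑ i, (r i)⁻¹) + 1) := mul_comm _ _
        · push_neg at hex
          calc (∏ k, (r k)⁻¹) ≤ ∏ _k : Fin n, (2/α : ℝ) := by
                apply Finset.prod_le_prod (fun k _ => inv_nonneg.2 (hr0 k).le)
                intro k _
                rw [show (2/α : ℝ) = (α/2)⁻¹ by rw [inv_div]]
                exact inv_anti₀ (by linarith) (hex k)
            _ = (2/α : ℝ)^n := by rw [Finset.prod_const, Finset.card_univ, Fintype.card_fin]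
            _ ≤ K := by
                rw [hKdef]
                exact pow_le_pow_left₀ (by positivity) (by linarith) n
            _ ≤ K * ((∑ j, (r j)⁻¹) + 1) := le_mul_of_one_le_right hK0.le (by linarith)
      have hterm : ∀ j, t ^ (p-1) * (r j)⁻¹ ≤ 2 * (t ^ (-a) * (r j) ^ (-a)) := by
        intro j
        have hr0j := hr0 j
        have h1 : (r j)⁻¹ = (r j) ^ (-a) * (r j) ^ (a - 1) := by
          rw [← Real.rpow_add hr0j, show -a + (a - 1) = (-1 : ℝ) by ring, Real.rpow_neg_one]
        have h2 : (r j) ^ (a - 1) ≤ 2 * t ^ (a - 1) := by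
          have e1 : (r j) ^ (a-1) ≤ (t/2) ^ (a-1) :=
            Real.rpow_le_rpow_of_nonpos (by linarith) (hrt j) (by linarith)
          have e2 : (t/2 : ℝ) ^ (a-1) = t ^ (a-1) * 2 ^ (1 - a) := by
            rw [show (t/2 : ℝ) = t * 2⁻¹ by ring, Real.mul_rpow ht0.le (by norm_num),
              ← Real.rpow_neg_one 2, ← Real.rpow_mul (by norm_num : (0:ℝ) ≤ 2)]
            ring_nf
          have e3 : (2:ℝ) ^ (1-a) ≤ 2 := by
            nth_rewrite 2 [← Real.rpow_one 2]
            exact Real.rpow_le_rpow_of_exponent_le one_le_two (by linarith)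
          calc (r j) ^ (a-1) ≤ t ^ (a-1) * 2 ^ (1-a) := by rw [← e2]; exact e1
            _ ≤ t ^ (a-1) * 2 :=
                mul_le_mul_of_nonneg_left e3 (Real.rpow_nonneg ht0.le _)
            _ = 2 * t ^ (a-1) := mul_comm _ _
        have h3 : t ^ (p-1) * t ^ (a-1) ≤ t ^ (-a) := by
          rw [← Real.rpow_add ht0]
          exact Real.rpow_le_rpow_of_exponent_ge ht0 ht1 (by linarith)
        calc t ^ (p-1) * (r j)⁻¹ = t ^ (p-1) * ((r j) ^ (-a) * (r j) ^ (a-1)) := by rw [h1]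
          _ ≤ t ^ (p-1) * ((r j) ^ (-a) * (2 * t ^ (a-1))) := by
              apply mul_le_mul_of_nonneg_left _ (Real.rpow_nonneg ht0.le _)
              exact mul_le_mul_of_nonneg_left h2 (Real.rpow_nonneg hr0j.le _)
          _ = 2 * ((t ^ (p-1) * t ^ (a-1)) * (r j) ^ (-a)) := by ring
          _ ≤ 2 * (t ^ (-a) * (r j) ^ (-a)) := by
              apply mul_le_mul_of_nonneg_left _ (by norm_num)
              exact mul_le_mul_of_nonneg_right h3 (Real.rpow_nonneg hr0j.le _)
      have hconst : t ^ (p-1) ≤ 2 * t ^ (-a) := by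
        have h4 : t ^ (p-1) ≤ t ^ (-a) :=
          Real.rpow_le_rpow_of_exponent_ge ht0 ht1 (by linarith)
        nlinarith [Real.rpow_nonneg ht0.le (-a)]
      have hreal : f z ≤ 2*K * ((∑ j, t ^ (-a) * (r j) ^ (-a)) + t ^ (-a)) := by
        have h0 : (0:ℝ) ≤ t ^ (p-1) := Real.rpow_nonneg ht0.le _
        calc f z = t ^ (p-1) * ∏ k, (r k)⁻¹ := rfl
          _ ≤ t ^ (p-1) * (K * ((∑ j, (r j)⁻¹) + 1)) :=
              mul_le_mul_of_nonneg_left hprod h0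
          _ = K * ((∑ j, t ^ (p-1) * (r j)⁻¹) + t ^ (p-1)) := by
              rw [← Finset.mul_sum]; ring
          _ ≤ K * ((∑ j, 2 * (t ^ (-a) * (r j) ^ (-a))) + 2 * t ^ (-a)) := by
              apply mul_le_mul_of_nonneg_left _ hK0.le
              exact add_le_add (Finset.sum_le_sum (fun j _ => hterm j)) hconst
          _ = 2*K * ((∑ j, t ^ (-a) * (r j) ^ (-a)) + t ^ (-a)) := by
              rw [← Finset.mul_sum]; ring
      refine (ENNReal.ofReal_le_ofReal hreal).trans (le_of_eq ?_)
      rw [ENNReal.ofReal_mul (by positivity : (0:ℝ) ≤ 2*K)]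
      congr 1
      rw [ENNReal.ofReal_add (Finset.sum_nonneg (fun j _ =>
          mul_nonneg (Real.rpow_nonneg ht0.le _) (Real.rpow_nonneg (hr0 j).le _)))
        (Real.rpow_nonneg ht0.le _),
        ENNReal.ofReal_sum_of_nonneg (fun j _ =>
          mul_nonneg (Real.rpow_nonneg ht0.le _) (Real.rpow_nonneg (hr0 j).le _))]
    calc ∫⁻ z in ball (0:ℂ) 1, ENNReal.ofReal (f z)
        ≤ ∫⁻ z in ball (0:ℂ) 1, (ENNReal.ofReal (2*K) *
          ((∑ j : Fin n, ENNReal.ofReal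
              ((1 - ‖z‖ ^ 2) ^ (-a) * (‖z - η j‖) ^ (-a)))
            + ENNReal.ofReal ((1 - ‖z‖ ^ 2) ^ (-a)))) :=
          setLIntegral_mono hgm hstep
      _ = ENNReal.ofReal (2*K) *
          ((∑ j : Fin n, ∫⁻ z in ball (0:ℂ) 1, ENNReal.ofReal
              ((1 - ‖z‖ ^ 2) ^ (-a) * (‖z - η j‖) ^ (-a)))
            + ∫⁻ z in ball (0:ℂ) 1, ENNReal.ofReal ((1 - ‖z‖ ^ 2) ^ (-a))) := by
          rw [lintegral_const_mul' _ _ ENNReal.ofReal_ne_top]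
          congr 1
          rw [lintegral_add_left]
          · congr 1
            rw [lintegral_finset_sum]
            intro j _
            exact ((hg1 (-a)).mul (hg2 (η j) (-a))).ennreal_ofReal
          · apply Finset.measurable_sum
            intro j _
            exact ((hg1 (-a)).mul (hg2 (η j) (-a))).ennreal_ofReal
      _ ≤ ENNReal.ofReal (2*K) *
          ((∑ _j : Fin n, ENNReal.ofReal C₀) + ENNReal.ofReal C₀) := by
          apply mul_le_mul_right
          apply add_le_add
          · exact Finset.sum_le_sum (fun j _ => aux17_key1 ha ha' (η j) (hunit j))
          · exact aux17_key0 ha ha'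
      _ ≤ ENNReal.ofReal (2*K*(n+1)*C₀) := by
          rw [Finset.sum_const, Finset.card_univ, Fintype.card_fin, nsmul_eq_mul]
          rw [show ((n:ℝ≥0∞)) = ENNReal.ofReal ((n:ℝ)) by rw [ENNReal.ofReal_natCast]]
          rw [← ENNReal.ofReal_mul (by positivity), ← ENNReal.ofReal_add (by positivity) hC0.le,
            ← ENNReal.ofReal_mul (by positivity)]
          apply ENNReal.ofReal_le_ofReal
          apply le_of_eq
          ring
  constructor
  · constructor
    · exact hfm.aestronglyMeasurable
    · rw [hasFiniteIntegral_iff_norm]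
      have heqn : ∫⁻ z in ball (0:ℂ) 1, ENNReal.ofReal ‖f z‖
          = ∫⁻ z in ball (0:ℂ) 1, ENNReal.ofReal (f z) :=
        setLIntegral_congr_fun_ae measurableSet_ball (ae_of_all _ (fun z hz => by
          rw [Real.norm_eq_abs, _root_.abs_of_nonneg (hfnn z hz)]))
      rw [heqn]
      exact lt_of_le_of_lt hmain ENNReal.ofReal_lt_top
  · have heq : ∫ z in ball (0:ℂ) 1, f z
        = (∫⁻ z in ball (0:ℂ) 1, ENNReal.ofReal (f z)).toReal :=
      integral_eq_lintegral_of_nonneg_ae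
        ((ae_restrict_iff' measurableSet_ball).2 (ae_of_all _ hfnn))
        hfm.aestronglyMeasurable
    rw [heq]
    apply ENNReal.toReal_le_of_le_ofReal (by positivity)
    refine hmain.trans (ENNReal.ofReal_le_ofReal ?_)
    linarith
end
end
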